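/- arXiv:1007.0163 — 7 statements merged into one kernel-verified Lean document; each statement's English description precedes it below -/
import Mathlib

section
/- Let d ≥ 1 and m ≥ 1 be integers and let B be a Hermitian inner product (conjugate-linear in the first argument, positive definite) on the complex vector space of homogeneous degree-m polynomials in the variables X₁,…,X_d. For u ∈ ℂ^d write ℓ_u = u₁X₁ + ⋯ + u_dX_d. Then the following are equivalent: (i) for all u, v ∈ ℂ^d, B(ℓ_u^m, ℓ_v^m) = (Σ_{i=1}^d conj(u_i)·v_i)^m; (ii) for every u ∈ ℂ^d with Σ_i |u_i|² = 1, B(ℓ_u^m, ℓ_u^m) = 1. -/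
open MvPolynomial

/-- The linear form `ℓ_u = u₁X₁ + ⋯ + u_dX_d`, raised to the `m`-th power,
as an element of the space of homogeneous degree-`m` polynomials. -/
noncomputable def ellPow (d m : ℕ) (u : Fin d → ℂ) :
    MvPolynomial.homogeneousSubmodule (Fin d) ℂ m :=
  ⟨(∑ i, MvPolynomial.C (u i) * MvPolynomial.X i) ^ m, by
    rw [MvPolynomial.mem_homogeneousSubmodule]
    have h1 : MvPolynomial.IsHomogeneous
        (∑ i, MvPolynomial.C (u i) * MvPolynomial.X i : MvPolynomial (Fin d) ℂ) 1 := by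
      apply MvPolynomial.IsHomogeneous.sum
      intro i _
      simpa using (MvPolynomial.isHomogeneous_C (Fin d) (u i)).mul
        (MvPolynomial.isHomogeneous_X ℂ i)
    simpa using h1.pow m⟩

section AuxAnalytic

lemma one_sub_mulI_ne (x : ℝ) : (1 - (x:ℂ) * Complex.I) ≠ 0 := by
  intro hc
  have := congrArg Complex.re hc
  simp at this

lemma circle_infinite (r : ℝ) (hr : 0 < r) : {z : ℂ | ‖z‖ = r}.Infinite := by
  refine Set.infinite_of_injective_forall_mem
    (f := fun x : ℝ => (r : ℂ) * (1 + x * Complex.I) / (1 - x * Complex.I)) ?_ ?_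
  · intro x y h
    have hx := one_sub_mulI_ne x
    have hy := one_sub_mulI_ne y
    have hr' : (r : ℂ) ≠ 0 := by exact_mod_cast hr.ne'
    have h : (r:ℂ) * (1 + x * Complex.I) / (1 - x * Complex.I)
        = r * (1 + y * Complex.I) / (1 - y * Complex.I) := h
    rw [div_eq_div_iff hx hy] at h
    have h3 : (2 * r * Complex.I) * ((x:ℂ) - y) = 0 := by linear_combination h
    have h2 : (x:ℂ) = y := by
      have hne : (2 * (r:ℂ) * Complex.I) ≠ 0 := by
        simp [hr']
      have := (mul_eq_zero.mp h3).resolve_left hne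
      exact sub_eq_zero.mp this
    exact_mod_cast h2
  · intro x
    have hx := one_sub_mulI_ne x
    have hconj : (starRingEnd ℂ) (1 + (x:ℂ) * Complex.I) = 1 - x * Complex.I := by
      simp [Complex.conj_ofReal]
      ring
    have habs2 : ‖(1 - (x:ℂ) * Complex.I)‖ = ‖(1 + (x:ℂ) * Complex.I)‖ := by
      rw [← hconj, Complex.norm_conj]
    simp only [Set.mem_setOf_eq, norm_div, norm_mul]
    rw [habs2]
    have habs : ‖(1 + (x:ℂ) * Complex.I)‖ ≠ 0 := by
      rw [← habs2]
      exact norm_ne_zero_iff.mpr hx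
    rw [mul_div_assoc, div_self habs, mul_one, Complex.norm_real, Real.norm_eq_abs, abs_of_pos hr]

lemma eval_evalC (F : Polynomial (Polynomial ℂ)) (s t : ℂ) :
    (F.eval (Polynomial.C s)).eval t
      = ∑ j ∈ Finset.range (F.natDegree + 1), (F.coeff j).eval t * s ^ j := by
  have e1 : F.eval (Polynomial.C s)
      = ∑ j ∈ Finset.range (F.natDegree + 1), F.coeff j * (Polynomial.C s) ^ j :=
    Polynomial.eval_eq_sum_range _
  rw [e1, Polynomial.eval_finset_sum]
  refine Finset.sum_congr rfl fun j _ => ?_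
  simp [mul_comm]

lemma polyE (F : Polynomial (Polynomial ℂ))
    (h : ∀ t : ℂ, ((F.eval (Polynomial.C ((starRingEnd ℂ) t))).eval t) = 0) : F = 0 := by
  set N := F.natDegree with hN
  have h1 : ∀ r : ℝ, 0 < r → ∀ t : ℂ,
      ∑ j ∈ Finset.range (N + 1), (F.coeff j).eval t * ((r:ℂ)^2) ^ j * t ^ (N - j) = 0 := by
    intro r hr
    set H : Polynomial ℂ :=
      ∑ j ∈ Finset.range (N + 1),
        F.coeff j * Polynomial.C (((r:ℂ)^2) ^ j) * Polynomial.X ^ (N - j) with hH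
    have hH0 : H = 0 := by
      apply Polynomial.eq_zero_of_infinite_isRoot
      apply Set.Infinite.mono ?_ (circle_infinite r hr)
      intro t ht
      simp only [Set.mem_setOf_eq] at ht ⊢
      have ht0 : t ≠ 0 := by
        intro hc; rw [hc] at ht; simp at ht; exact hr.ne' ht.symm
      have hconj : (starRingEnd ℂ) t * t = ((r:ℂ))^2 := by
        rw [mul_comm, Complex.mul_conj, Complex.normSq_eq_norm_sq, ht]
        push_cast
        ring
      have hkey := h t
      rw [eval_evalC] at hkey
      show H.IsRoot t
      have : H.eval t = t ^ N *
          ∑ j ∈ Finset.range (N + 1), (F.coeff j).eval t * ((starRingEnd ℂ) t) ^ j := by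
        rw [hH, Polynomial.eval_finset_sum, Finset.mul_sum]
        refine Finset.sum_congr rfl fun j hj => ?_
        have hj' : j ≤ N := Nat.lt_succ_iff.mp (Finset.mem_range.mp hj)
        have : t ^ N = t ^ j * t ^ (N - j) := by
          rw [← pow_add, Nat.add_sub_cancel' hj']
        rw [this]
        simp only [Polynomial.eval_mul, Polynomial.eval_pow, Polynomial.eval_C,
          Polynomial.eval_X]
        rw [← hconj]
        ring
      rw [← hN] at hkey
      rw [Polynomial.IsRoot, this, hkey, mul_zero]
    intro t
    have := congrArg (Polynomial.eval t) hH0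
    rw [hH, Polynomial.eval_finset_sum] at this
    simpa using this
  have h2 : ∀ j ∈ Finset.range (N + 1), ∀ t : ℂ, t ≠ 0 → (F.coeff j).eval t = 0 := by
    intro j hj t ht0
    set K : Polynomial ℂ :=
      ∑ k ∈ Finset.range (N + 1),
        Polynomial.C ((F.coeff k).eval t * t ^ (N - k)) * Polynomial.X ^ k with hK
    have hK0 : K = 0 := by
      apply Polynomial.eq_zero_of_infinite_isRoot
      refine Set.infinite_of_injective_forall_mem
        (f := fun n : ℕ => (((n:ℝ) + 1 : ℝ) : ℂ)^2) ?_ ?_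
      · intro a b hab
        simp only [] at hab
        have h0 : (((a:ℝ) + 1 : ℝ) : ℂ)^2 = (((b:ℝ) + 1 : ℝ) : ℂ)^2 := hab
        have hr : ((a:ℝ) + 1)^2 = ((b:ℝ)+1)^2 := by exact_mod_cast h0
        have h' : ((a:ℝ) - b) * ((a:ℝ) + b + 2) = 0 := by linear_combination hr
        have hpos : (0:ℝ) < (a:ℝ) + b + 2 := by positivity
        have : (a:ℝ) = b := by
          rcases mul_eq_zero.mp h' with h'' | h''
          · linarith
          · linarith
        exact_mod_cast this
      · intro n
        simp only [Set.mem_setOf_eq]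
        have := h1 ((n:ℝ) + 1) (by positivity) t
        rw [hK]
        simp only [Polynomial.IsRoot, Polynomial.eval_finset_sum, Polynomial.eval_mul,
          Polynomial.eval_pow, Polynomial.eval_C, Polynomial.eval_X]
        convert this using 2 with k
        ring
    have hcoeff : K.coeff j = (F.coeff j).eval t * t ^ (N - j) := by
      rw [hK, Polynomial.finset_sum_coeff]
      rw [Finset.sum_eq_single j]
      · rw [Polynomial.coeff_C_mul, Polynomial.coeff_X_pow]
        simp
      · intro k hk hkj
        rw [Polynomial.coeff_C_mul, Polynomial.coeff_X_pow]
        simp [Ne.symm hkj]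
      · intro hc; exact absurd hj hc
    rw [hK0] at hcoeff
    simp only [Polynomial.coeff_zero] at hcoeff
    have := hcoeff.symm
    rcases mul_eq_zero.mp this with h' | h'
    · exact h'
    · exact absurd h' (pow_ne_zero _ ht0)
  have h3 : ∀ j, F.coeff j = 0 := by
    intro j
    by_cases hj : j ≤ N
    · apply Polynomial.eq_zero_of_infinite_isRoot
      apply Set.Infinite.mono (s := {(0:ℂ)}ᶜ)
      · intro t ht
        exact h2 j (Finset.mem_range.mpr (Nat.lt_succ_of_le hj)) t ht
      · exact (Set.finite_singleton 0).infinite_compl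
    · exact Polynomial.coeff_eq_zero_of_natDegree_lt (by omega)
  exact Polynomial.ext fun n => by simp [h3 n]

end AuxAnalytic

section AuxAlg

lemma ellHomog {d : ℕ} (w : Fin d → ℂ) :
    MvPolynomial.IsHomogeneous (∑ i, MvPolynomial.C (w i) * MvPolynomial.X i :
      MvPolynomial (Fin d) ℂ) 1 := by
  apply MvPolynomial.IsHomogeneous.sum
  intro i _
  simpa using (MvPolynomial.isHomogeneous_C (Fin d) (w i)).mul
    (MvPolynomial.isHomogeneous_X ℂ i)

noncomputable def qMix (d m : ℕ) (u v : Fin d → ℂ) (j : ℕ) :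
    MvPolynomial.homogeneousSubmodule (Fin d) ℂ m :=
  ⟨(∑ i, MvPolynomial.C (u i) * MvPolynomial.X i) ^ (m - j) *
     (∑ i, MvPolynomial.C (v i) * MvPolynomial.X i) ^ (min j m), by
    rw [MvPolynomial.mem_homogeneousSubmodule]
    have h0 := ((ellHomog u).pow (m - j)).mul ((ellHomog v).pow (min j m))
    simp only [one_mul, mul_one] at h0
    rw [show m - j + min j m = m from by omega] at h0
    exact h0⟩

lemma ell_add_smul {d : ℕ} (u v : Fin d → ℂ) (c : ℂ) :
    (∑ i, MvPolynomial.C ((u + c • v) i) * MvPolynomial.X i : MvPolynomial (Fin d) ℂ)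
      = MvPolynomial.C c * (∑ i, MvPolynomial.C (v i) * MvPolynomial.X i)
        + (∑ i, MvPolynomial.C (u i) * MvPolynomial.X i) := by
  rw [Finset.mul_sum, ← Finset.sum_add_distrib]
  refine Finset.sum_congr rfl fun i _ => ?_
  simp only [Pi.add_apply, Pi.smul_apply, smul_eq_mul, map_add, map_mul]
  ring

lemma ellPow_add_smul (d m : ℕ) (u v : Fin d → ℂ) (c : ℂ) :
    ellPow d m (u + c • v)
      = ∑ j ∈ Finset.range (m + 1), ((c ^ j * (m.choose j : ℂ)) • qMix d m u v j) := by
  apply Subtype.ext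
  push_cast [ellPow, qMix, Submodule.coe_sum]
  rw [ell_add_smul, add_pow]
  refine Finset.sum_congr rfl fun j hj => ?_
  have hj' : j ≤ m := Nat.lt_succ_iff.mp (Finset.mem_range.mp hj)
  rw [min_eq_left hj']
  rw [MvPolynomial.smul_eq_C_mul]
  simp only [mul_pow, map_mul, map_pow, map_natCast]
  ring

lemma ellPow_smul (d m : ℕ) (c : ℂ) (w : Fin d → ℂ) :
    ellPow d m (c • w) = c ^ m • ellPow d m w := by
  apply Subtype.ext
  push_cast [ellPow]
  rw [MvPolynomial.smul_eq_C_mul]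
  have : (∑ i, MvPolynomial.C ((c • w) i) * MvPolynomial.X i : MvPolynomial (Fin d) ℂ)
      = MvPolynomial.C c * ∑ i, MvPolynomial.C (w i) * MvPolynomial.X i := by
    rw [Finset.mul_sum]
    refine Finset.sum_congr rfl fun i _ => ?_
    simp only [Pi.smul_apply, smul_eq_mul, map_mul]
    ring
  rw [this, mul_pow, map_pow]

lemma ellPow_zero (d m : ℕ) (hm : 1 ≤ m) : ellPow d m (0 : Fin d → ℂ) = 0 := by
  apply Subtype.ext
  push_cast [ellPow]
  simp [zero_pow (by omega : m ≠ 0)]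

end AuxAlg

/-- For a Hermitian positive definite inner product `B`
(conjugate-linear in the first argument) on the space of homogeneous degree-`m`
polynomials in `d` variables, the condition `B(ℓ_u^m, ℓ_v^m) = ⟨u,v⟩^m` for all
`u, v` is equivalent to `B(ℓ_u^m, ℓ_u^m) = 1` for all unit vectors `u`. -/
theorem stmt_1 (d m : ℕ) (hd : 1 ≤ d) (hm : 1 ≤ m)
    (B : (MvPolynomial.homogeneousSubmodule (Fin d) ℂ m) →ₗ⋆[ℂ]
         (MvPolynomial.homogeneousSubmodule (Fin d) ℂ m) →ₗ[ℂ] ℂ)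
    (hherm : ∀ x y, B x y = starRingEnd ℂ (B y x))
    (hpos : ∀ x, x ≠ 0 → 0 < (B x x).re) :
    (∀ u v : Fin d → ℂ,
        B (ellPow d m u) (ellPow d m v) = (∑ i, starRingEnd ℂ (u i) * v i) ^ m)
    ↔ (∀ u : Fin d → ℂ, (∑ i, ‖u i‖ ^ 2) = 1 →
        B (ellPow d m u) (ellPow d m u) = 1) := by
  have hsum : ∀ w : Fin d → ℂ,
      (∑ i, (starRingEnd ℂ) (w i) * w i) = ((∑ i, ‖w i‖ ^ 2 : ℝ) : ℂ) := by
    intro w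
    push_cast
    refine Finset.sum_congr rfl fun i _ => ?_
    rw [mul_comm, Complex.mul_conj, Complex.normSq_eq_norm_sq]
    push_cast
    ring
  constructor
  · intro h1 u hu
    rw [h1 u u, hsum u, hu]
    simp
  · intro h2
    -- Step A : diagonal identity for all vectors
    have hdiag : ∀ w : Fin d → ℂ,
        B (ellPow d m w) (ellPow d m w) = (∑ i, (starRingEnd ℂ) (w i) * w i) ^ m := by
      intro w
      by_cases hw : w = 0
      · subst hw
        rw [ellPow_zero d m hm]
        simp [zero_pow (by omega : m ≠ 0)]
      · have hpos' : 0 < ∑ i, ‖w i‖ ^ 2 := by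
          obtain ⟨i0, hi0⟩ : ∃ i, w i ≠ 0 := by
            by_contra hc
            push_neg at hc
            exact hw (funext hc)
          apply Finset.sum_pos' (fun i _ => by positivity)
          exact ⟨i0, Finset.mem_univ i0, by
            simpa using pow_pos (norm_pos_iff.mpr hi0) 2⟩
        set ρ : ℝ := Real.sqrt (∑ i, ‖w i‖ ^ 2) with hρ
        have hρpos : 0 < ρ := Real.sqrt_pos.mpr hpos'
        have hρsq : ρ ^ 2 = ∑ i, ‖w i‖ ^ 2 := Real.sq_sqrt hpos'.le
        set u : Fin d → ℂ := ((ρ⁻¹ : ℝ) : ℂ) • w with hu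
        have hw' : w = ((ρ : ℝ) : ℂ) • u := by
          rw [hu, smul_smul]
          rw [show ((ρ:ℝ):ℂ) * ((ρ⁻¹:ℝ):ℂ) = 1 by
            push_cast
            exact mul_inv_cancel₀ (by exact_mod_cast hρpos.ne')]
          rw [one_smul]
        have hunit : (∑ i, ‖u i‖ ^ 2) = 1 := by
          have e : ∀ i : Fin d, ‖u i‖ ^ 2 = ρ⁻¹ ^ 2 * ‖w i‖ ^ 2 := by
            intro i
            rw [hu]
            simp only [Pi.smul_apply, smul_eq_mul, norm_mul, Complex.norm_real, Real.norm_eq_abs,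
              abs_of_pos (inv_pos.mpr hρpos)]
            ring
          rw [Finset.sum_congr rfl fun i _ => e i, ← Finset.mul_sum, ← hρsq]
          field_simp
        rw [hsum w, ← hρsq, hw', ellPow_smul]
        simp only [LinearMap.map_smulₛₗ, LinearMap.smul_apply, map_smul, smul_eq_mul]
        rw [h2 u hunit, mul_one]
        rw [map_pow, Complex.conj_ofReal]
        push_cast
        ring
    -- Step B : polarization via two-variable polynomial identity
    have hBexp : ∀ u v : Fin d → ℂ, ∀ s t : ℂ,
        B (ellPow d m (u + (starRingEnd ℂ) s • v)) (ellPow d m (u + t • v))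
          = ∑ j ∈ Finset.range (m+1), ∑ k ∈ Finset.range (m+1),
              ((m.choose j : ℂ) * (m.choose k) *
                B (qMix d m u v j) (qMix d m u v k)) * s ^ j * t ^ k := by
      intro u v s t
      rw [ellPow_add_smul, ellPow_add_smul]
      simp only [map_sum, LinearMap.map_smulₛₗ, LinearMap.sum_apply, LinearMap.smul_apply,
        map_smul, smul_eq_mul, map_mul, map_pow, map_natCast, Complex.conj_conj]
      rw [Finset.sum_comm]
      refine Finset.sum_congr rfl fun j hj => ?_
      rw [Finset.mul_sum]
      refine Finset.sum_congr rfl fun k hk => ?_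
      ring
    have hinner : ∀ u v : Fin d → ℂ, ∀ s t : ℂ,
        (∑ i, (starRingEnd ℂ) ((u + (starRingEnd ℂ) s • v) i) * ((u + t • v) i))
          = (∑ i, (starRingEnd ℂ) (u i) * u i)
            + (∑ i, (starRingEnd ℂ) (v i) * u i) * s
            + (∑ i, (starRingEnd ℂ) (u i) * v i) * t
            + (∑ i, (starRingEnd ℂ) (v i) * v i) * (s * t) := by
      intro u v s t
      have e : ∀ i : Fin d,
          (starRingEnd ℂ) ((u + (starRingEnd ℂ) s • v) i) * ((u + t • v) i)
            = (starRingEnd ℂ) (u i) * u i + ((starRingEnd ℂ) (v i) * u i) * s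
              + ((starRingEnd ℂ) (u i) * v i) * t
              + ((starRingEnd ℂ) (v i) * v i) * (s * t) := by
        intro i
        simp only [Pi.add_apply, Pi.smul_apply, smul_eq_mul, map_add, map_mul,
          Complex.conj_conj]
        ring
      rw [Finset.sum_congr rfl fun i _ => e i]
      rw [Finset.sum_add_distrib, Finset.sum_add_distrib, Finset.sum_add_distrib,
        ← Finset.sum_mul, ← Finset.sum_mul, ← Finset.sum_mul]
    have hoff : ∀ u v : Fin d → ℂ, ∀ s t : ℂ,
        B (ellPow d m (u + (starRingEnd ℂ) s • v)) (ellPow d m (u + t • v))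
          = (∑ i, (starRingEnd ℂ) ((u + (starRingEnd ℂ) s • v) i) * ((u + t • v) i)) ^ m := by
      intro u v
      set F : Polynomial (Polynomial ℂ) :=
        (∑ j ∈ Finset.range (m+1), Polynomial.C
            (∑ k ∈ Finset.range (m+1),
              Polynomial.C ((m.choose j : ℂ) * (m.choose k) *
                B (qMix d m u v j) (qMix d m u v k)) * Polynomial.X ^ k) * Polynomial.X ^ j)
        - (Polynomial.C (Polynomial.C (∑ i, (starRingEnd ℂ) (u i) * u i)
              + Polynomial.C (∑ i, (starRingEnd ℂ) (u i) * v i) * Polynomial.X)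
           + Polynomial.C (Polynomial.C (∑ i, (starRingEnd ℂ) (v i) * u i)
              + Polynomial.C (∑ i, (starRingEnd ℂ) (v i) * v i) * Polynomial.X)
             * Polynomial.X) ^ m with hF
      have hmain : ∀ s t : ℂ, (F.eval (Polynomial.C s)).eval t
          = B (ellPow d m (u + (starRingEnd ℂ) s • v)) (ellPow d m (u + t • v))
            - (∑ i, (starRingEnd ℂ) ((u + (starRingEnd ℂ) s • v) i) * ((u + t • v) i)) ^ m := by
        intro s t
        rw [hBexp, hinner, hF]
        simp only [Polynomial.eval_sub, Polynomial.eval_finset_sum, Polynomial.eval_mul,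
          Polynomial.eval_pow, Polynomial.eval_add, Polynomial.eval_C, Polynomial.eval_X]
        congr 1
        · refine Finset.sum_congr rfl fun j hj => ?_
          rw [Finset.sum_mul]
          refine Finset.sum_congr rfl fun k hk => ?_
          ring
        · congr 1
          ring
      have hFzero : F = 0 := by
        apply polyE
        intro t
        rw [hmain]
        have hv : u + (starRingEnd ℂ) ((starRingEnd ℂ) t) • v = u + t • v := by
          rw [Complex.conj_conj]
        rw [hv, hdiag (u + t • v), sub_self]
      intro s t
      have := hmain s t
      rw [hFzero] at this
      simp only [Polynomial.eval_zero] at this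
      exact (sub_eq_zero.mp this.symm)
    intro u₀ v₀
    have h01 := hoff u₀ (v₀ - u₀) 0 1
    have e1 : u₀ + (starRingEnd ℂ) 0 • (v₀ - u₀) = u₀ := by
      simp
    have e2 : u₀ + (1:ℂ) • (v₀ - u₀) = v₀ := by
      simp
    rw [e1, e2] at h01
    exact h01
end

section
/- (Lemma, part b.) Fix n ≥ 1 and 1 ≤ k ≤ n, working in the polynomial ring P defined in the context. Let w ∈ P be a weight vector and i ≠ j indices such that i does not appear in w and such that every monomial of w with nonzero coefficient contains the index j exactly d times (counted with multiplicity over its variables). Write u_{ij}(s)·w = Σ_{l=0}^{d} s^l · w_l with w_l ∈ P independent of s; then w_l = 0 for l > d, and for every 0 ≤ r ≤ d the coefficient w_{d−r} is a complex scalar multiple of τ·w_r, where τ ∈ S_n is the transposition exchanging i and j. -/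
open MvPolynomial

/-- Indexing set: `k`-element subsets of `{1,…,n}`. -/
abbrev FermionIdx (n k : ℕ) := {I : Finset (Fin n) // I.card = k}

/-- The polynomial ring `P` over `ℂ` in commuting variables `X_I` indexed by
`k`-element subsets of `{1,…,n}`, modelling `S(Λ^k ℂⁿ)`. -/
abbrev FermionPoly (n k : ℕ) := MvPolynomial (FermionIdx n k) ℂ

/-- The transvection `u_{ij}(s)` acting on `P` as a `ℂ`-algebra endomorphism:
`X_I ↦ X_I` if `j ∉ I` or `{i,j} ⊆ I`, and
`X_I ↦ X_I + (−1)^c·s·X_{(I∖{j})∪{i}}` if `j ∈ I`, `i ∉ I`, where `c` is the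
number of elements of `I` strictly between `min i j` and `max i j`. -/
noncomputable def transvect (n k : ℕ) (i j : Fin n) (s : ℂ) :
    FermionPoly n k →ₐ[ℂ] FermionPoly n k :=
  MvPolynomial.aeval (fun I : FermionIdx n k =>
    if h : j ∈ I.1 ∧ i ∉ I.1 then
      MvPolynomial.X I +
        (((-1 : ℂ) ^ ((I.1.filter (fun a => min i j < a ∧ a < max i j)).card)) * s) •
          MvPolynomial.X (⟨insert i (I.1.erase j), by
            rcases h with ⟨hj, hi⟩
            have hk : 0 < I.1.card := Finset.card_pos.mpr ⟨j, hj⟩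
            rw [Finset.card_insert_of_notMem
                (fun hm => hi (Finset.mem_of_mem_erase hm)),
              Finset.card_erase_of_mem hj]
            rw [I.2] at hk ⊢
            omega⟩ : FermionIdx n k)
    else MvPolynomial.X I)

/-- The sign `ε(π, I) ∈ {±1}` of the permutation sorting the list
`(π(i₁),…,π(i_k))`, computed as `(−1)^{#inversions}`. -/
noncomputable def signEps (n : ℕ) (π : Equiv.Perm (Fin n)) (I : Finset (Fin n)) : ℂ :=
  (-1 : ℂ) ^ ((I ×ˢ I).filter (fun p => p.1 < p.2 ∧ π p.2 < π p.1)).card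

/-- The action of `π ∈ S_n` on `P` by `ℂ`-algebra automorphisms:
`π·X_I = ε(π,I)·X_{π(I)}`. -/
noncomputable def permAct (n k : ℕ) (π : Equiv.Perm (Fin n)) :
    FermionPoly n k →ₐ[ℂ] FermionPoly n k :=
  MvPolynomial.aeval (fun I : FermionIdx n k =>
    signEps n π I.1 •
      MvPolynomial.X (⟨I.1.image π, by
        rw [Finset.card_image_of_injective _ π.injective, I.2]⟩ : FermionIdx n k))

/-- The torus action `D_t` on `P`: `D_t(X_I) = (Π_{a∈I} t_a)·X_I`. -/
noncomputable def torusAct (n k : ℕ) (t : Fin n → ℂˣ) :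
    FermionPoly n k →ₐ[ℂ] FermionPoly n k :=
  MvPolynomial.aeval (fun I : FermionIdx n k =>
    (∏ a ∈ I.1, (t a : ℂ)) • MvPolynomial.X I)

/-- `w` is a weight vector of weight `r ∈ ℤⁿ` if
`D_t(w) = (Π_a t_a^{r_a})·w` for all `t ∈ (ℂˣ)ⁿ`. -/
def IsWeightVector (n k : ℕ) (w : FermionPoly n k) (r : Fin n → ℤ) : Prop :=
  ∀ t : Fin n → ℂˣ, torusAct n k t w = (∏ a, (t a : ℂ) ^ (r a)) • w

/-- The index `i` appears in `w` if some monomial of `w` with nonzero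
coefficient contains a variable `X_I` with `i ∈ I`. -/
def AppearsIn (n k : ℕ) (i : Fin n) (w : FermionPoly n k) : Prop :=
  ∃ mono ∈ w.support, ∃ I ∈ mono.support, i ∈ I.1

/-- The number of times index `j` occurs in a monomial, counted with
multiplicity over its variables. -/
def idxMultiplicity (n k : ℕ) (j : Fin n) (mono : FermionIdx n k →₀ ℕ) : ℕ :=
  ∑ I ∈ mono.support, if j ∈ I.1 then mono I else 0

/-- `S ⊆ P` is good if `⋃_{w∈S} ℂw` is stable under the `S_n`-action and every
element of `S` is a weight vector. -/
def IsGood (n k : ℕ) (S : Set (FermionPoly n k)) : Prop :=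
  (∀ π : Equiv.Perm (Fin n), ∀ w ∈ S, ∃ v ∈ S, ∃ c : ℂ, permAct n k π w = c • v) ∧
  (∀ w ∈ S, ∃ r : Fin n → ℤ, IsWeightVector n k w r)


section Aux
variable {n : ℕ}

lemma sumU {σ : Type*} (a b : ℕ → MvPolynomial σ ℂ) (ea eb : ℕ → ℕ) (N M : ℕ)
    (h : ∀ s : ℂ, s ≠ 0 → ∑ l ∈ Finset.range N, s ^ (ea l) • a l
        = ∑ l ∈ Finset.range M, s ^ (eb l) • b l) :
    ∀ t, ∑ l ∈ (Finset.range N).filter (fun l => ea l = t), a l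
       = ∑ l ∈ (Finset.range M).filter (fun l => eb l = t), b l := by
  intro t
  ext m₀
  rw [MvPolynomial.coeff_sum, MvPolynomial.coeff_sum]
  set p : Polynomial ℂ := ∑ l ∈ Finset.range N,
    Polynomial.C (MvPolynomial.coeff m₀ (a l)) * Polynomial.X ^ ea l with hp
  set q : Polynomial ℂ := ∑ l ∈ Finset.range M,
    Polynomial.C (MvPolynomial.coeff m₀ (b l)) * Polynomial.X ^ eb l with hq
  have hpq : p = q := by
    have heval : ∀ s : ℂ, s ≠ 0 → p.eval s = q.eval s := by
      intro s hs
      have := congrArg (MvPolynomial.coeff m₀) (h s hs)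
      rw [MvPolynomial.coeff_sum, MvPolynomial.coeff_sum] at this
      simp only [MvPolynomial.coeff_smul, smul_eq_mul] at this
      simp only [hp, hq, Polynomial.eval_finset_sum, Polynomial.eval_mul,
        Polynomial.eval_C, Polynomial.eval_pow, Polynomial.eval_X, mul_comm]
      exact this
    have h0 : p - q = 0 := by
      apply Polynomial.eq_zero_of_infinite_isRoot
      apply Set.Infinite.mono (s := {x : ℂ | x ≠ 0})
      · intro x hx
        simp only [Set.mem_setOf_eq, Polynomial.IsRoot, Polynomial.eval_sub]
        rw [heval x hx]; ring
      · exact (Set.finite_singleton 0).infinite_compl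
    exact sub_eq_zero.mp h0
  have := congrArg (fun r : Polynomial ℂ => r.coeff t) hpq
  simp only [hp, hq, Polynomial.finset_sum_coeff, Polynomial.coeff_C_mul_X_pow] at this
  rw [Finset.sum_filter, Finset.sum_filter]
  simp only [eq_comm (a := t)] at this
  exact this

lemma sign1 {n : ℕ} {i j : Fin n} {A : Finset (Fin n)} (hi : i ∉ A) (hj : j ∉ A) :
    signEps n (Equiv.swap i j) A = 1 := by
  unfold signEps
  have : (A ×ˢ A).filter (fun p => p.1 < p.2 ∧ Equiv.swap i j p.2 < Equiv.swap i j p.1) = ∅ := by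
    ext ⟨a, b⟩
    simp only [Finset.mem_filter, Finset.mem_product, Finset.notMem_empty, iff_false]
    rintro ⟨⟨ha, hb⟩, h1, h2⟩
    rw [Equiv.swap_apply_of_ne_of_ne (fun h : _ = i => hi (h ▸ ha)) (fun h : _ = j => hj (h ▸ ha)),
        Equiv.swap_apply_of_ne_of_ne (fun h : _ = i => hi (h ▸ hb)) (fun h : _ = j => hj (h ▸ hb))] at h2
    exact absurd h1 (not_lt.mpr h2.le)
  rw [this]; simp

lemma sign2 {n : ℕ} {i j : Fin n} {A : Finset (Fin n)} (hj : j ∈ A) (hi : i ∉ A) (hij : i ≠ j) :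
    signEps n (Equiv.swap i j) A
      = (-1 : ℂ) ^ ((A.filter (fun a => min i j < a ∧ a < max i j)).card) := by
  unfold signEps
  rcases lt_or_gt_of_ne hij with hlt | hgt
  · have : (A ×ˢ A).filter (fun p => p.1 < p.2 ∧ Equiv.swap i j p.2 < Equiv.swap i j p.1)
        = (A.filter (fun a => min i j < a ∧ a < max i j)) ×ˢ {j} := by
      ext ⟨a, b⟩
      simp only [Finset.mem_filter, Finset.mem_product, Finset.mem_singleton]
      constructor
      · rintro ⟨⟨ha, hb⟩, h1, h2⟩
        have hai : a ≠ i := fun h : _ = i => hi (h ▸ ha)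
        have hbi : b ≠ i := fun h : _ = i => hi (h ▸ hb)
        by_cases hbj : b = j
        · subst hbj
          rw [Equiv.swap_apply_right, Equiv.swap_apply_of_ne_of_ne hai (ne_of_lt h1)] at h2
          exact ⟨⟨ha, by simp [min_eq_left hlt.le, max_eq_right hlt.le, h2, h1]⟩, rfl⟩
        · rw [Equiv.swap_apply_of_ne_of_ne hbi hbj] at h2
          by_cases haj : a = j
          · subst haj
            rw [Equiv.swap_apply_right] at h2
            exact absurd (h2.trans hlt) (not_lt.mpr h1.le)
          · rw [Equiv.swap_apply_of_ne_of_ne hai haj] at h2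
            exact absurd h1 (not_lt.mpr h2.le)
      · rintro ⟨⟨ha, h1, h2⟩, rfl⟩
        rw [min_eq_left hlt.le] at h1; rw [max_eq_right hlt.le] at h2
        refine ⟨⟨ha, hj⟩, h2, ?_⟩
        rw [Equiv.swap_apply_right,
          Equiv.swap_apply_of_ne_of_ne (fun h : _ = i => hi (h ▸ ha)) (ne_of_lt h2)]
        exact h1
    rw [this, Finset.card_product, Finset.card_singleton, mul_one]
  · have : (A ×ˢ A).filter (fun p => p.1 < p.2 ∧ Equiv.swap i j p.2 < Equiv.swap i j p.1)
        = {j} ×ˢ (A.filter (fun a => min i j < a ∧ a < max i j)) := by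
      ext ⟨a, b⟩
      simp only [Finset.mem_filter, Finset.mem_product, Finset.mem_singleton]
      constructor
      · rintro ⟨⟨ha, hb⟩, h1, h2⟩
        have hai : a ≠ i := fun h : _ = i => hi (h ▸ ha)
        have hbi : b ≠ i := fun h : _ = i => hi (h ▸ hb)
        by_cases haj : a = j
        · subst haj
          rw [Equiv.swap_apply_right, Equiv.swap_apply_of_ne_of_ne hbi (ne_of_gt h1)] at h2
          exact ⟨rfl, hb, by simp [min_eq_right hgt.le, max_eq_left hgt.le, h1, h2]⟩
        · rw [Equiv.swap_apply_of_ne_of_ne hai haj] at h2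
          by_cases hbj : b = j
          · subst hbj
            rw [Equiv.swap_apply_right] at h2
            exact absurd (h1.trans hgt) (not_lt.mpr h2.le)
          · rw [Equiv.swap_apply_of_ne_of_ne hbi hbj] at h2
            exact absurd h1 (not_lt.mpr h2.le)
      · rintro ⟨rfl, hb, h1, h2⟩
        rw [min_eq_right hgt.le] at h1; rw [max_eq_left hgt.le] at h2
        refine ⟨⟨hj, hb⟩, h1, ?_⟩
        rw [Equiv.swap_apply_right,
          Equiv.swap_apply_of_ne_of_ne (fun h : _ = i => hi (h ▸ hb)) (ne_of_gt h1)]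
        exact h2
    rw [this, Finset.card_product, Finset.card_singleton, one_mul]

lemma imageFix {i j : Fin n} {A : Finset (Fin n)} (hi : i ∉ A) (hj : j ∉ A) :
    A.image (Equiv.swap i j) = A := by
  ext a
  simp only [Finset.mem_image]
  constructor
  · rintro ⟨b, hb, rfl⟩
    rwa [Equiv.swap_apply_of_ne_of_ne (fun h : _ = i => hi (h ▸ hb))
      (fun h : _ = j => hj (h ▸ hb))]
  · intro ha
    exact ⟨a, ha, Equiv.swap_apply_of_ne_of_ne (fun h : _ = i => hi (h ▸ ha))
      (fun h : _ = j => hj (h ▸ ha))⟩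

lemma imageSwap {i j : Fin n} {A : Finset (Fin n)} (hj : j ∈ A) (hi : i ∉ A) :
    A.image (Equiv.swap i j) = insert i (A.erase j) := by
  ext a
  simp only [Finset.mem_image, Finset.mem_insert, Finset.mem_erase]
  constructor
  · rintro ⟨b, hb, rfl⟩
    by_cases hbj : b = j
    · subst hbj; left; exact Equiv.swap_apply_right _ _
    · right
      rw [Equiv.swap_apply_of_ne_of_ne (fun h : _ = i => hi (h ▸ hb)) hbj]
      exact ⟨hbj, hb⟩
  · rintro (rfl | ⟨haj, ha⟩)
    · exact ⟨_, hj, Equiv.swap_apply_right _ _⟩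
    · exact ⟨a, ha, Equiv.swap_apply_of_ne_of_ne (fun h : _ = i => hi (h ▸ ha)) haj⟩

lemma betweenEq {i j : Fin n} (hij : i ≠ j) (A : Finset (Fin n)) :
    ((insert i (A.erase j)).filter (fun a => min i j < a ∧ a < max i j))
      = A.filter (fun a => min i j < a ∧ a < max i j) := by
  have hi : ¬ (min i j < i ∧ i < max i j) := by
    rcases lt_or_gt_of_ne hij with h | h
    · simp [min_eq_left h.le]
    · simp [max_eq_left h.le]
  have hj : ¬ (min i j < j ∧ j < max i j) := by
    rcases lt_or_gt_of_ne hij with h | h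
    · simp [max_eq_right h.le]
    · simp [min_eq_right h.le]
  rw [Finset.filter_insert, if_neg hi, Finset.filter_erase]
  exact Finset.erase_eq_of_notMem (fun h => hj (Finset.mem_filter.mp h).2)

lemma doubleFlip {i j : Fin n} {A : Finset (Fin n)} (hj : j ∈ A) (hi : i ∉ A) (hij : i ≠ j) :
    insert j ((insert i (A.erase j)).erase i) = A := by
  rw [Finset.erase_insert (by simp [hij, Finset.mem_erase]; exact fun h => absurd h hi),
    Finset.insert_erase hj]

end Aux


lemma X_congr {n k : ℕ} {A B : Finset (Fin n)} (pA : A.card = k) (pB : B.card = k)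
    (h : A = B) : (MvPolynomial.X ⟨A, pA⟩ : FermionPoly n k) = MvPolynomial.X ⟨B, pB⟩ := by
  subst h; rfl

lemma varIdent (n k : ℕ) (i j : Fin n) (hij : i ≠ j) (s : ℂ) (hs : s ≠ 0)
    (I : FermionIdx n k) (hiI : i ∉ I.1) :
    permAct n k (Equiv.swap i j) (transvect n k i j s⁻¹ (MvPolynomial.X I))
      = (if j ∈ I.1 then s⁻¹ else (1:ℂ)) • transvect n k i j s (MvPolynomial.X I) := by
  by_cases hj : j ∈ I.1
  · rw [if_pos hj]
    simp only [transvect, aeval_X, dif_pos (And.intro hj hiI)]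
    rw [map_add, map_smul]
    simp only [permAct, aeval_X]
    set ε : ℂ := (-1 : ℂ) ^ ((I.1.filter (fun a => min i j < a ∧ a < max i j)).card) with hε
    have hiI' : i ∈ insert i (I.1.erase j) := Finset.mem_insert_self _ _
    have hjI' : j ∉ insert i (I.1.erase j) := by
      simp [Finset.mem_insert, Finset.mem_erase, (Ne.symm hij)]
    have hs1 : signEps n (Equiv.swap i j) I.1 = ε := sign2 hj hiI hij
    have hs2 : signEps n (Equiv.swap i j) (insert i (I.1.erase j)) = ε := by
      rw [Equiv.swap_comm, sign2 hiI' hjI' (Ne.symm hij), hε, min_comm j i, max_comm j i,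
        betweenEq hij]
    have him1 : (I.1.image (Equiv.swap i j)) = insert i (I.1.erase j) := imageSwap hj hiI
    have him2 : ((insert i (I.1.erase j)).image (Equiv.swap i j))
        = I.1 := by
      rw [Equiv.swap_comm, imageSwap hiI' hjI', doubleFlip hj hiI hij]
    have hcard : (insert i ((I.1).erase j)).card = k := by
      have h0 : 0 < I.1.card := Finset.card_pos.mpr ⟨j, hj⟩
      rw [Finset.card_insert_of_notMem (fun hm => hiI (Finset.mem_of_mem_erase hm)),
        Finset.card_erase_of_mem hj]
      rw [I.2] at h0 ⊢
      omega
    rw [hs1, hs2, X_congr _ hcard him1, X_congr _ I.2 him2]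
    rw [smul_smul, smul_add, smul_smul]
    have hee : ε * ε = 1 := by
      rw [hε, ← pow_add]
      exact Even.neg_one_pow ⟨_, rfl⟩
    have h1 : ε * s⁻¹ * ε = s⁻¹ := by
      rw [mul_comm ε s⁻¹, mul_assoc, hee, mul_one]
    have h2 : s⁻¹ * (ε * s) = ε := by
      rw [mul_comm ε s, ← mul_assoc, inv_mul_cancel₀ hs, one_mul]
    rw [Subtype.coe_eta, h1, h2, add_comm]
  · rw [if_neg hj, one_smul]
    have hcond : ¬ (j ∈ I.1 ∧ i ∉ I.1) := fun h => hj h.1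
    simp only [transvect, aeval_X, dif_neg hcond]
    simp only [permAct, aeval_X]
    rw [sign1 hiI hj, one_smul, X_congr _ I.2 (imageFix hiI hj), Subtype.coe_eta]


lemma keyIdent (n k : ℕ) (i j : Fin n) (hij : i ≠ j) (d : ℕ)
    (w : FermionPoly n k) (hi : ¬ AppearsIn n k i w)
    (hd : ∀ mono ∈ w.support, idxMultiplicity n k j mono = d)
    (s : ℂ) (hs : s ≠ 0) :
    transvect n k i j s w
      = s ^ d • permAct n k (Equiv.swap i j) (transvect n k i j s⁻¹ w) := by
  have hI : ∀ μ ∈ w.support, ∀ I ∈ μ.support, i ∉ I.1 := by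
    intro μ hμ I hIμ hiI
    exact hi ⟨μ, hμ, I, hIμ, hiI⟩
  conv_lhs => rw [w.as_sum]
  conv_rhs => rw [w.as_sum]
  rw [map_sum, map_sum, map_sum, Finset.smul_sum]
  apply Finset.sum_congr rfl
  intro μ hμ
  rw [MvPolynomial.monomial_eq, Finsupp.prod]
  rw [map_mul, map_prod, map_mul, map_prod, map_mul, map_prod]
  simp only [map_pow]
  have hvar : ∀ I ∈ μ.support,
      (permAct n k (Equiv.swap i j) (transvect n k i j s⁻¹ (MvPolynomial.X I))) ^ μ I
      = MvPolynomial.C ((if j ∈ I.1 then s⁻¹ else 1) ^ μ I)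
          * (transvect n k i j s (MvPolynomial.X I)) ^ μ I := by
    intro I hIμ
    rw [varIdent n k i j hij s hs I (hI μ hμ I hIμ), smul_pow,
      MvPolynomial.smul_eq_C_mul]
  rw [Finset.prod_congr rfl hvar, Finset.prod_mul_distrib]
  rw [show (∏ x ∈ μ.support, MvPolynomial.C ((if j ∈ x.1 then s⁻¹ else (1:ℂ)) ^ μ x))
      = MvPolynomial.C (∏ x ∈ μ.support, (if j ∈ x.1 then s⁻¹ else (1:ℂ)) ^ μ x) from
    (map_prod (MvPolynomial.C : ℂ →+* FermionPoly n k) _ _).symm]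
  have hscal : (∏ I ∈ μ.support, (if j ∈ I.1 then s⁻¹ else 1) ^ μ I) = s⁻¹ ^ d := by
    have : ∀ I ∈ μ.support, (if j ∈ I.1 then s⁻¹ else (1:ℂ)) ^ μ I
        = s⁻¹ ^ (if j ∈ I.1 then μ I else 0) := by
      intro I _
      by_cases hjI : j ∈ I.1 <;> simp [hjI]
    rw [Finset.prod_congr rfl this, Finset.prod_pow_eq_pow_sum]
    rw [← hd μ hμ]
    rfl
  rw [hscal]
  simp only [MvPolynomial.algHom_C, MvPolynomial.algebraMap_eq]
  rw [MvPolynomial.smul_eq_C_mul, ← mul_assoc, ← mul_assoc, ← map_mul, ← map_mul]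
  congr 2
  field_simp
  rw [one_div, inv_pow, mul_assoc, mul_inv_cancel₀ (pow_ne_zero d hs), mul_one]

/-- Lemma, part b: if `w` is a weight vector, `i` does not appear
in `w`, and every monomial of `w` contains the index `j` exactly `d` times,
then in `u_{ij}(s)·w = Σ_l s^l·w_l` the coefficients `w_l` vanish for `l > d`,
and `w_{d−r}` is a scalar multiple of `τ·w_r` for the transposition
`τ = (i j)`. -/
theorem stmt_5 (n k : ℕ) (hn : 1 ≤ n) (hk1 : 1 ≤ k) (hkn : k ≤ n)
    (w : FermionPoly n k) (hw : ∃ r : Fin n → ℤ, IsWeightVector n k w r)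
    (i j : Fin n) (hij : i ≠ j) (hi : ¬ AppearsIn n k i w)
    (d : ℕ) (hd : ∀ mono ∈ w.support, idxMultiplicity n k j mono = d)
    (N : ℕ) (coeffs : ℕ → FermionPoly n k)
    (hrep : ∀ s : ℂ,
      transvect n k i j s w = ∑ l ∈ Finset.range N, s ^ l • coeffs l)
    (hpad : ∀ l, N ≤ l → coeffs l = 0) :
    (∀ l : ℕ, d < l → coeffs l = 0) ∧
    (∀ r : ℕ, r ≤ d → ∃ c : ℂ,
      coeffs (d - r) = c • permAct n k (Equiv.swap i j) (coeffs r)) := by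
  have key : ∀ s : ℂ, s ≠ 0 →
      ∑ l ∈ Finset.range N, s ^ (l + N) • coeffs l
        = ∑ l ∈ Finset.range N,
            s ^ (N + d - l) • permAct n k (Equiv.swap i j) (coeffs l) := by
    intro s hs
    have hkey := keyIdent n k i j hij d w hi hd s hs
    rw [hrep s, hrep s⁻¹, map_sum, Finset.smul_sum] at hkey
    calc ∑ l ∈ Finset.range N, s ^ (l + N) • coeffs l
        = s ^ N • ∑ l ∈ Finset.range N, s ^ l • coeffs l := by
          rw [Finset.smul_sum]
          refine Finset.sum_congr rfl fun l _ => ?_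
          rw [smul_smul, ← pow_add, add_comm]
      _ = s ^ N • ∑ l ∈ Finset.range N,
            s ^ d • permAct n k (Equiv.swap i j) (s⁻¹ ^ l • coeffs l) := by rw [hkey]
      _ = ∑ l ∈ Finset.range N,
            s ^ (N + d - l) • permAct n k (Equiv.swap i j) (coeffs l) := by
          rw [Finset.smul_sum]
          refine Finset.sum_congr rfl fun l hl => ?_
          have hl' : l < N := Finset.mem_range.mp hl
          rw [map_smul, smul_smul, smul_smul]
          congr 1
          rw [pow_sub₀ s hs (by omega : l ≤ N + d), pow_add, inv_pow]
  have hU := sumU coeffs (fun l => permAct n k (Equiv.swap i j) (coeffs l))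
    (fun l => l + N) (fun l => N + d - l) N N key
  constructor
  · intro l hdl
    by_cases hlN : l < N
    · have h := hU (l + N)
      rw [show (Finset.range N).filter (fun l' => l' + N = l + N) = {l} from by
          ext a; simp only [Finset.mem_filter, Finset.mem_range, Finset.mem_singleton]; omega,
        show (Finset.range N).filter (fun l' => N + d - l' = l + N) = ∅ from by
          ext a; simp only [Finset.mem_filter, Finset.mem_range, Finset.notMem_empty, iff_false]
          omega] at h
      rw [Finset.sum_singleton, Finset.sum_empty] at h
      exact h
    · exact hpad l (le_of_not_gt hlN)
  · intro r hr
    by_cases h1 : d - r < N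
    · have h := hU (N + d - r)
      rw [show (Finset.range N).filter (fun l' => l' + N = N + d - r) = {d - r} from by
          ext a; simp only [Finset.mem_filter, Finset.mem_range, Finset.mem_singleton]; omega
        ] at h
      rw [Finset.sum_singleton] at h
      by_cases h2 : r < N
      · refine ⟨1, ?_⟩
        rw [show (Finset.range N).filter (fun l' => N + d - l' = N + d - r) = {r} from by
            ext a; simp only [Finset.mem_filter, Finset.mem_range, Finset.mem_singleton]; omega
          ] at h
        rw [Finset.sum_singleton] at h
        rw [h, one_smul]
      · refine ⟨1, ?_⟩
        rw [show (Finset.range N).filter (fun l' => N + d - l' = N + d - r) = ∅ from by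
            ext a; simp only [Finset.mem_filter, Finset.mem_range, Finset.notMem_empty, iff_false]
            omega] at h
        rw [Finset.sum_empty] at h
        rw [h, hpad r (le_of_not_gt h2), map_zero, smul_zero]
    · refine ⟨0, ?_⟩
      rw [hpad (d - r) (le_of_not_gt h1), zero_smul]
end

section
/- (Lemma, part c.) Fix n ≥ 1 and 1 ≤ k ≤ n, working in the polynomial ring P defined in the context. Let S ⊆ P be a good subset, let w ∈ S, and let i ≠ j be indices such that i does not appear in w and such that every monomial of w with nonzero coefficient contains the index j exactly d times. Write u_{ij}(s)·w = Σ_{l=0}^{d} s^l · w_l with w_l ∈ P independent of s. Then the constant coefficient satisfies w_0 = w, and both w_0 and the leading coefficient w_d belong to ⋃_{v∈S} ℂv. -/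
open MvPolynomial

section Comb
variable {n : ℕ} {i j : Fin n} {I : Finset (Fin n)}

lemma img_swap_notmem (hi : i ∉ I) (hj : j ∉ I) : I.image (Equiv.swap i j) = I := by
  ext x
  simp only [Finset.mem_image]
  constructor
  · rintro ⟨a, ha, rfl⟩
    rwa [Equiv.swap_apply_of_ne_of_ne (by rintro rfl; exact hi ha) (by rintro rfl; exact hj ha)]
  · intro hx
    exact ⟨x, hx, Equiv.swap_apply_of_ne_of_ne (by rintro rfl; exact hi hx)
      (by rintro rfl; exact hj hx)⟩

lemma img_swap_mem (hi : i ∉ I) (hj : j ∈ I) :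
    I.image (Equiv.swap i j) = insert i (I.erase j) := by
  have hij : i ≠ j := by rintro rfl; exact hi hj
  ext x
  simp only [Finset.mem_image, Finset.mem_insert, Finset.mem_erase]
  constructor
  · rintro ⟨a, ha, rfl⟩
    by_cases h1 : a = j
    · subst h1; left; exact Equiv.swap_apply_right _ _
    · have h2 : a ≠ i := by rintro rfl; exact hi ha
      rw [Equiv.swap_apply_of_ne_of_ne h2 h1]
      exact Or.inr ⟨h1, ha⟩
  · rintro (rfl | ⟨h1, h2⟩)
    · exact ⟨j, hj, Equiv.swap_apply_right _ _⟩
    · have h3 : x ≠ i := by rintro rfl; exact hi h2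
      exact ⟨x, h2, Equiv.swap_apply_of_ne_of_ne h3 h1⟩

lemma sign_swap_notmem (hi : i ∉ I) (hj : j ∉ I) : signEps n (Equiv.swap i j) I = 1 := by
  unfold signEps
  rw [Finset.filter_eq_empty_iff.mpr, Finset.card_empty, pow_zero]
  rintro ⟨a, b⟩ hab
  simp only [Finset.mem_product] at hab
  have ha : Equiv.swap i j a = a := Equiv.swap_apply_of_ne_of_ne
    (by rintro rfl; exact hi hab.1) (by rintro rfl; exact hj hab.1)
  have hb : Equiv.swap i j b = b := Equiv.swap_apply_of_ne_of_ne
    (by rintro rfl; exact hi hab.2) (by rintro rfl; exact hj hab.2)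
  rw [ha, hb]
  rintro ⟨h1, h2⟩
  exact absurd h1 (not_lt.mpr h2.le)

lemma sign_swap_mem (hi : i ∉ I) (hj : j ∈ I) :
    signEps n (Equiv.swap i j) I =
      (-1 : ℂ) ^ ((I.filter (fun a => min i j < a ∧ a < max i j)).card) := by
  have hij : i ≠ j := by rintro rfl; exact hi hj
  unfold signEps
  congr 1
  rcases lt_or_gt_of_ne hij with hlt | hlt
  · rw [min_eq_left hlt.le, max_eq_right hlt.le]
    have himg : (I ×ˢ I).filter (fun p => p.1 < p.2 ∧ Equiv.swap i j p.2 < Equiv.swap i j p.1)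
        = (I.filter (fun a => i < a ∧ a < j)).image (fun a => (a, j)) := by
      ext ⟨a, b⟩
      simp only [Finset.mem_filter, Finset.mem_product, Finset.mem_image, Prod.mk.injEq]
      constructor
      · rintro ⟨⟨ha, hb⟩, h1, h2⟩
        have hai : a ≠ i := by rintro rfl; exact hi ha
        have hbi : b ≠ i := by rintro rfl; exact hi hb
        by_cases hbj : b = j
        · rw [hbj] at h1 h2 ⊢
          have haj : a ≠ j := ne_of_lt h1
          rw [Equiv.swap_apply_right, Equiv.swap_apply_of_ne_of_ne hai haj] at h2
          exact ⟨a, ⟨ha, h2, h1⟩, rfl, rfl⟩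
        · rw [Equiv.swap_apply_of_ne_of_ne hbi hbj] at h2
          by_cases haj : a = j
          · subst haj
            rw [Equiv.swap_apply_right] at h2
            exact absurd (h2.trans (hlt.trans h1)) (lt_irrefl b)
          · rw [Equiv.swap_apply_of_ne_of_ne hai haj] at h2
            exact absurd h1 (not_lt.mpr h2.le)
      · rintro ⟨a', ⟨ha', h1, h2⟩, rfl, rfl⟩
        have hai : a' ≠ i := ne_of_gt h1
        have haj : a' ≠ j := ne_of_lt h2
        rw [Equiv.swap_apply_right, Equiv.swap_apply_of_ne_of_ne hai haj]
        exact ⟨⟨ha', hj⟩, h2, h1⟩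
    rw [himg, Finset.card_image_of_injective _ (fun a b h => (Prod.mk.injEq _ _ _ _).mp h |>.1)]
  · rw [min_eq_right hlt.le, max_eq_left hlt.le]
    have himg : (I ×ˢ I).filter (fun p => p.1 < p.2 ∧ Equiv.swap i j p.2 < Equiv.swap i j p.1)
        = (I.filter (fun a => j < a ∧ a < i)).image (fun b => (j, b)) := by
      ext ⟨a, b⟩
      simp only [Finset.mem_filter, Finset.mem_product, Finset.mem_image, Prod.mk.injEq]
      constructor
      · rintro ⟨⟨ha, hb⟩, h1, h2⟩
        have hai : a ≠ i := by rintro rfl; exact hi ha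
        have hbi : b ≠ i := by rintro rfl; exact hi hb
        by_cases haj : a = j
        · rw [haj] at h1 h2 ⊢
          have hbj : b ≠ j := ne_of_gt h1
          rw [Equiv.swap_apply_right, Equiv.swap_apply_of_ne_of_ne hbi hbj] at h2
          exact ⟨b, ⟨hb, h1, h2⟩, rfl, rfl⟩
        · rw [Equiv.swap_apply_of_ne_of_ne hai haj] at h2
          by_cases hbj : b = j
          · subst hbj
            rw [Equiv.swap_apply_right] at h2
            exact absurd (h2.trans (h1.trans hlt)) (lt_irrefl i)
          · rw [Equiv.swap_apply_of_ne_of_ne hbi hbj] at h2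
            exact absurd h1 (not_lt.mpr h2.le)
      · rintro ⟨b', ⟨hb', h1, h2⟩, rfl, rfl⟩
        have hbi : b' ≠ i := ne_of_lt h2
        have hbj : b' ≠ j := ne_of_gt h1
        rw [Equiv.swap_apply_right, Equiv.swap_apply_of_ne_of_ne hbi hbj]
        exact ⟨⟨hj, hb'⟩, h1, h2⟩
    rw [himg, Finset.card_image_of_injective _ (fun a b h => (Prod.mk.injEq _ _ _ _).mp h |>.2)]

end Comb


section Aux

lemma coeff_prodAux {R : Type*} [CommSemiring R] {ι : Type*} (s : Finset ι)
    (f : ι → Polynomial R) (nn : ι → ℕ) (h : ∀ x ∈ s, (f x).natDegree ≤ nn x) :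
    (∏ x ∈ s, f x).coeff (∑ x ∈ s, nn x) = ∏ x ∈ s, (f x).coeff (nn x) := by
  induction s using Finset.cons_induction with
  | empty => simp
  | cons a s ha ih =>
    rw [Finset.prod_cons, Finset.sum_cons,
      Polynomial.coeff_mul_add_eq_of_natDegree_le (h a (Finset.mem_cons_self a s))
        (le_trans (Polynomial.natDegree_prod_le _ _)
          (Finset.sum_le_sum (fun x hx => h x (Finset.mem_cons_of_mem hx)))),
      ih (fun x hx => h x (Finset.mem_cons_of_mem hx)), Finset.prod_cons]

noncomputable def flipIdx (n k : ℕ) (i j : Fin n) (I : FermionIdx n k) : FermionIdx n k :=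
  ⟨I.1.image (Equiv.swap i j), by
    rw [Finset.card_image_of_injective _ (Equiv.swap i j).injective, I.2]⟩

noncomputable def vGen (n k : ℕ) (i j : Fin n) (I : FermionIdx n k) : FermionPoly n k :=
  if j ∈ I.1 ∧ i ∉ I.1 then
    ((-1 : ℂ) ^ ((I.1.filter (fun a => min i j < a ∧ a < max i j)).card)) •
      MvPolynomial.X (flipIdx n k i j I)
  else 0

noncomputable def Psi (n k : ℕ) (i j : Fin n) :
    FermionPoly n k →ₐ[ℂ] Polynomial (FermionPoly n k) :=
  MvPolynomial.aeval (fun I => Polynomial.C (MvPolynomial.X I) +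
    Polynomial.C (vGen n k i j I) * Polynomial.X)

lemma eval_Psi (n k : ℕ) (i j : Fin n) (s : ℂ) (w : FermionPoly n k) :
    Polynomial.eval (MvPolynomial.C s) (Psi n k i j w) = transvect n k i j s w := by
  have h : ((Polynomial.aeval (MvPolynomial.C s : FermionPoly n k)).restrictScalars ℂ).comp
      (Psi n k i j) = transvect n k i j s := by
    apply MvPolynomial.algHom_ext
    intro I
    rw [AlgHom.comp_apply, Psi, MvPolynomial.aeval_X, transvect, MvPolynomial.aeval_X]
    rw [AlgHom.coe_restrictScalars', map_add, map_mul, Polynomial.aeval_C, Polynomial.aeval_C,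
      Polynomial.aeval_X]
    simp only [Algebra.algebraMap_self, RingHom.id_apply]
    by_cases h : j ∈ I.1 ∧ i ∉ I.1
    · rw [dif_pos h, vGen, if_pos h]
      rw [smul_mul_assoc, mul_comm _ (MvPolynomial.C s), MvPolynomial.C_mul', smul_smul]
      congr 3
      exact Subtype.ext (img_swap_mem h.2 h.1)
    · rw [dif_neg h, vGen, if_neg h]
      rw [zero_mul, add_zero]
  rw [← h, AlgHom.comp_apply, AlgHom.coe_restrictScalars', ← Polynomial.coe_aeval_eq_eval]

lemma transvect_zero (n k : ℕ) (i j : Fin n) (w : FermionPoly n k) :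
    transvect n k i j 0 w = w := by
  have he : transvect n k i j 0 = AlgHom.id ℂ (FermionPoly n k) := by
    apply MvPolynomial.algHom_ext
    intro I
    rw [transvect, MvPolynomial.aeval_X, AlgHom.id_apply]
    by_cases h : j ∈ I.1 ∧ i ∉ I.1
    · rw [dif_pos h, mul_zero, zero_smul, add_zero]
    · rw [dif_neg h]
  rw [he, AlgHom.id_apply]

lemma coeff_unique (n k M : ℕ) (a b : ℕ → FermionPoly n k)
    (h : ∀ s : ℂ, ∑ l ∈ Finset.range M, s ^ l • a l = ∑ l ∈ Finset.range M, s ^ l • b l)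
    {l : ℕ} (hl : l < M) : a l = b l := by
  have key : ∀ c : ℕ → ℂ, (∀ s : ℂ, ∑ l' ∈ Finset.range M, s ^ l' * c l' = 0) → c l = 0 := by
    intro c hc
    have hp : (∑ l' ∈ Finset.range M, Polynomial.C (c l') * Polynomial.X ^ l')
        = (0 : Polynomial ℂ) := by
      apply Polynomial.funext
      intro r
      rw [Polynomial.eval_finset_sum, Polynomial.eval_zero, ← hc r]
      apply Finset.sum_congr rfl
      intro x _
      rw [Polynomial.eval_mul, Polynomial.eval_C, Polynomial.eval_pow, Polynomial.eval_X,
        mul_comm]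
    have h2 := congrArg (fun p => Polynomial.coeff p l) hp
    simp only [Polynomial.finset_sum_coeff, Polynomial.coeff_C_mul, Polynomial.coeff_X_pow,
      Polynomial.coeff_zero, mul_ite, mul_one, mul_zero] at h2
    rwa [Finset.sum_ite_eq (Finset.range M) l c, if_pos (Finset.mem_range.mpr hl)] at h2
  apply MvPolynomial.ext
  intro m
  have hz := key (fun l' => MvPolynomial.coeff m (a l') - MvPolynomial.coeff m (b l'))
    (fun s => by
      have h3 := congrArg (MvPolynomial.coeff m) (h s)
      simp only [MvPolynomial.coeff_sum, MvPolynomial.coeff_smul, smul_eq_mul] at h3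
      simp only [mul_sub, Finset.sum_sub_distrib, h3, sub_self])
  exact sub_eq_zero.mp hz

lemma coeff_Psi_d (n k : ℕ) (i j : Fin n) (w : FermionPoly n k) (d : ℕ)
    (hi : ∀ m ∈ w.support, ∀ I ∈ m.support, i ∉ I.1)
    (hd : ∀ m ∈ w.support, idxMultiplicity n k j m = d) :
    (Psi n k i j w).coeff d = permAct n k (Equiv.swap i j) w := by
  rw [Psi, permAct, MvPolynomial.aeval_def, MvPolynomial.aeval_def, MvPolynomial.eval₂_eq,
    MvPolynomial.eval₂_eq, Polynomial.finset_sum_coeff]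
  apply Finset.sum_congr rfl
  intro m hm
  have halg : (algebraMap ℂ (Polynomial (FermionPoly n k))) (MvPolynomial.coeff m w)
      = Polynomial.C (MvPolynomial.C (MvPolynomial.coeff m w)) := by
    rw [IsScalarTower.algebraMap_apply ℂ (FermionPoly n k) (Polynomial (FermionPoly n k))]
    rfl
  rw [halg, Polynomial.coeff_C_mul, ← MvPolynomial.algebraMap_eq]
  congr 1
  rw [← hd m hm, idxMultiplicity,
    coeff_prodAux m.support _ (fun I => if j ∈ I.1 then m I else 0) ?hdeg]
  case hdeg =>
    intro I hI
    by_cases hj : j ∈ I.1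
    · simp only [if_pos hj]
      calc ((Polynomial.C (MvPolynomial.X I) + Polynomial.C (vGen n k i j I)
              * Polynomial.X) ^ m I).natDegree
          ≤ m I * (Polynomial.C (MvPolynomial.X I) + Polynomial.C (vGen n k i j I)
              * Polynomial.X).natDegree := Polynomial.natDegree_pow_le
        _ ≤ m I * 1 := by
            apply Nat.mul_le_mul_left
            apply le_trans (Polynomial.natDegree_add_le _ _)
            apply max_le ((Polynomial.natDegree_C _).le.trans (Nat.zero_le 1))
            apply le_trans Polynomial.natDegree_mul_le
            rw [Polynomial.natDegree_C, Polynomial.natDegree_X]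
        _ = m I := mul_one _
    · simp only [if_neg hj]
      have hv : vGen n k i j I = 0 := if_neg (fun h => hj h.1)
      rw [hv, Polynomial.C_0, zero_mul, add_zero, ← Polynomial.C_pow, Polynomial.natDegree_C]
  apply Finset.prod_congr rfl
  intro I hI
  by_cases hj : j ∈ I.1
  · have hiI := hi m hm I hI
    have hv : vGen n k i j I =
        ((-1 : ℂ) ^ ((I.1.filter (fun a => min i j < a ∧ a < max i j)).card)) •
          MvPolynomial.X (flipIdx n k i j I) := if_pos ⟨hj, hiI⟩
    have hvne : vGen n k i j I ≠ 0 := by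
      rw [hv]
      exact smul_ne_zero (pow_ne_zero _ (neg_ne_zero.mpr one_ne_zero)) (MvPolynomial.X_ne_zero _)
    have hnd : (Polynomial.C (MvPolynomial.X I) + Polynomial.C (vGen n k i j I)
        * Polynomial.X).natDegree = 1 := by
      rw [add_comm, Polynomial.natDegree_add_C, Polynomial.natDegree_C_mul_X _ hvne]
    have hlc : (Polynomial.C (MvPolynomial.X I) + Polynomial.C (vGen n k i j I)
        * Polynomial.X).leadingCoeff = vGen n k i j I := by
      rw [Polynomial.leadingCoeff, hnd]
      simp [Polynomial.coeff_C]
    rw [if_pos hj]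
    have hcoeff : ((Polynomial.C (MvPolynomial.X I) + Polynomial.C (vGen n k i j I)
        * Polynomial.X) ^ m I).coeff (m I) = vGen n k i j I ^ m I := by
      have := Polynomial.coeff_pow_mul_natDegree (Polynomial.C (MvPolynomial.X I) +
        Polynomial.C (vGen n k i j I) * Polynomial.X) (m I)
      rwa [hnd, mul_one, hlc] at this
    rw [hcoeff, hv, sign_swap_mem hiI hj]
    rfl
  · have hiI := hi m hm I hI
    rw [if_neg hj]
    have hv : vGen n k i j I = 0 := if_neg (fun h => hj h.1)
    rw [hv, sign_swap_notmem hiI hj, one_smul]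
    have himg : (⟨I.1.image (Equiv.swap i j), by
        rw [Finset.card_image_of_injective _ (Equiv.swap i j).injective, I.2]⟩ : FermionIdx n k)
        = I := Subtype.ext (img_swap_notmem hiI hj)
    rw [himg, Polynomial.C_0, zero_mul, add_zero, ← Polynomial.C_pow, Polynomial.coeff_C_zero]

end Aux

/-- Lemma, part c: for a good subset `S` and `w ∈ S` as in the
lemma, the constant coefficient of `u_{ij}(s)·w` equals `w`, and both the
constant and the leading coefficient belong to `⋃_{v∈S} ℂv`. -/
theorem stmt_6 (n k : ℕ) (hn : 1 ≤ n) (hk1 : 1 ≤ k) (hkn : k ≤ n)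
    (S : Set (FermionPoly n k)) (hS : IsGood n k S)
    (w : FermionPoly n k) (hwS : w ∈ S)
    (i j : Fin n) (hij : i ≠ j) (hi : ¬ AppearsIn n k i w)
    (d : ℕ) (hd : ∀ mono ∈ w.support, idxMultiplicity n k j mono = d)
    (N : ℕ) (coeffs : ℕ → FermionPoly n k)
    (hrep : ∀ s : ℂ,
      transvect n k i j s w = ∑ l ∈ Finset.range N, s ^ l • coeffs l)
    (hpad : ∀ l, N ≤ l → coeffs l = 0) :
    coeffs 0 = w ∧
    (∃ v ∈ S, ∃ c : ℂ, coeffs 0 = c • v) ∧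
    (∃ v ∈ S, ∃ c : ℂ, coeffs d = c • v) := by
  classical
  have hiI : ∀ m ∈ w.support, ∀ I ∈ m.support, i ∉ I.1 := by
    intro m hm I hI hmem
    exact hi ⟨m, hm, I, hI, hmem⟩
  have hc0 : coeffs 0 = w := by
    have h1 := hrep 0
    rw [transvect_zero] at h1
    rcases Nat.eq_zero_or_pos N with hN | hN
    · rw [hN] at h1
      simp only [Finset.range_zero, Finset.sum_empty] at h1
      rw [hpad 0 (by omega), h1]
    · rw [Finset.sum_eq_single 0 (fun b _ hb => by rw [zero_pow hb, zero_smul])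
        (fun h => absurd (Finset.mem_range.mpr hN) h)] at h1
      simpa using h1.symm
  refine ⟨hc0, ⟨w, hwS, 1, by rw [hc0, one_smul]⟩, ?_⟩
  obtain ⟨v, hv, c, hcv⟩ := hS.1 (Equiv.swap i j) w hwS
  refine ⟨v, hv, c, ?_⟩
  rw [← hcv, ← coeff_Psi_d n k i j w d hiI hd]
  set M := max N ((Psi n k i j w).natDegree + 1) with hM
  have hsum : ∀ s : ℂ, ∑ l ∈ Finset.range M, s ^ l • coeffs l
      = ∑ l ∈ Finset.range M, s ^ l • (Psi n k i j w).coeff l := by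
    intro s
    have hL : ∑ l ∈ Finset.range M, s ^ l • coeffs l
        = ∑ l ∈ Finset.range N, s ^ l • coeffs l := by
      symm
      apply Finset.sum_subset (Finset.range_subset_range.mpr (le_max_left _ _))
      intro x _ hx
      rw [hpad x (by simpa using hx), smul_zero]
    have hR : Polynomial.eval (MvPolynomial.C s) (Psi n k i j w)
        = ∑ l ∈ Finset.range M, s ^ l • (Psi n k i j w).coeff l := by
      rw [Polynomial.eval_eq_sum_range' (lt_of_lt_of_le (Nat.lt_succ_self _) (le_max_right _ _))]
      apply Finset.sum_congr rfl
      intro l _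
      rw [mul_comm, ← map_pow, MvPolynomial.C_mul']
    rw [hL, ← hrep s, ← eval_Psi n k i j s w, hR]
  rcases lt_or_ge d M with h | h
  · exact coeff_unique n k M coeffs _ hsum h
  · rw [hpad d (le_trans (le_max_left _ _) h),
      Polynomial.coeff_eq_zero_of_natDegree_lt (by omega)]
end

section
/- (Corollary.) Fix n ≥ 1 and 1 ≤ k ≤ n, working in the polynomial ring P defined in the context. Let S ⊆ P be a good subset and let w ∈ S be such that, for some pair of distinct indices i, j ∈ {1,…,n}, every monomial of w with nonzero coefficient contains the index j exactly once (counted with multiplicity over its variables) and the index i does not appear in w. Then for every s ∈ ℂ, the element u_{ij}(s)·w lies in the ℂ-linear span of S. -/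
open MvPolynomial

section Aux

variable {n k : ℕ}

lemma swap_apply_of_mem (i j : Fin n) (I : Finset (Fin n)) (hi : i ∉ I)
    {x : Fin n} (hx : x ∈ I) : Equiv.swap i j x = if x = j then i else x := by
  rcases eq_or_ne x j with rfl | hxj
  · simp [Equiv.swap_apply_right]
  · rw [Equiv.swap_apply_of_ne_of_ne (by rintro rfl; exact hi hx) hxj, if_neg hxj]

lemma image_swap_of_mem (i j : Fin n) (I : Finset (Fin n)) (hj : j ∈ I) (hi : i ∉ I) :
    I.image (Equiv.swap i j) = insert i (I.erase j) := by
  ext a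
  simp only [Finset.mem_image, Finset.mem_insert, Finset.mem_erase]
  constructor
  · rintro ⟨b, hb, rfl⟩
    rw [swap_apply_of_mem i j I hi hb]
    split_ifs with h
    · exact Or.inl rfl
    · exact Or.inr ⟨h, hb⟩
  · rintro (hai | ⟨haj, haI⟩)
    · exact ⟨j, hj, (Equiv.swap_apply_right i j).trans hai.symm⟩
    · exact ⟨a, haI, by rw [swap_apply_of_mem i j I hi haI, if_neg haj]⟩

lemma image_swap_of_not_mem (i j : Fin n) (I : Finset (Fin n)) (hj : j ∉ I) (hi : i ∉ I) :
    I.image (Equiv.swap i j) = I := by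
  rw [Finset.image_congr (g := id), Finset.image_id]
  intro x hx
  rw [swap_apply_of_mem i j I hi hx, if_neg (by rintro rfl; exact hj hx)]
  rfl

lemma signEps_swap_of_not_mem (i j : Fin n) (I : Finset (Fin n)) (hj : j ∉ I) (hi : i ∉ I) :
    signEps n (Equiv.swap i j) I = 1 := by
  unfold signEps
  have : ((I ×ˢ I).filter
      (fun p => p.1 < p.2 ∧ Equiv.swap i j p.2 < Equiv.swap i j p.1)) = ∅ := by
    rw [Finset.filter_eq_empty_iff]
    rintro ⟨a, b⟩ hab
    rw [Finset.mem_product] at hab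
    rw [swap_apply_of_mem i j I hi hab.1, swap_apply_of_mem i j I hi hab.2,
      if_neg (by rintro rfl; exact hj hab.2), if_neg (by rintro rfl; exact hj hab.1)]
    rintro ⟨h1, h2⟩
    exact absurd h1 (not_lt.mpr h2.le)
  rw [this]
  simp

lemma signEps_swap_of_mem (i j : Fin n) (hij : i ≠ j) (I : Finset (Fin n))
    (hj : j ∈ I) (hi : i ∉ I) :
    signEps n (Equiv.swap i j) I =
      (-1 : ℂ) ^ ((I.filter fun a => min i j < a ∧ a < max i j).card) := by
  unfold signEps
  congr 1
  rcases lt_or_gt_of_ne hij with hlt | hlt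
  · -- i < j : inversions are pairs (a, j) with i < a < j
    have hfe : ((I ×ˢ I).filter
        (fun p => p.1 < p.2 ∧ Equiv.swap i j p.2 < Equiv.swap i j p.1)) =
        (I.filter fun a => min i j < a ∧ a < max i j) ×ˢ {j} := by
      ext ⟨a, b⟩
      simp only [Finset.mem_filter, Finset.mem_product, Finset.mem_singleton,
        min_eq_left hlt.le, max_eq_right hlt.le]
      constructor
      · rintro ⟨⟨haI, hbI⟩, hab, hinv⟩
        rw [swap_apply_of_mem i j I hi haI, swap_apply_of_mem i j I hi hbI] at hinv
        have hbj : b = j := by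
          by_contra hbj
          rw [if_neg hbj] at hinv
          split_ifs at hinv with haj
          · subst haj; exact absurd (hab.trans hinv) (not_lt.mpr hlt.le)
          · exact absurd hinv (not_lt.mpr hab.le)
        have hab' : a < j := hbj ▸ hab
        have haj : a ≠ j := ne_of_lt hab'
        rw [hbj, if_pos rfl, if_neg haj] at hinv
        exact ⟨⟨haI, hinv, hab'⟩, hbj⟩
      · rintro ⟨⟨haI, hia, haj⟩, hbj⟩
        have hbI : b ∈ I := by rw [hbj]; exact hj
        refine ⟨⟨haI, hbI⟩, by rw [hbj]; exact haj, ?_⟩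
        rw [swap_apply_of_mem i j I hi haI, swap_apply_of_mem i j I hi hbI,
          if_pos hbj, if_neg (ne_of_lt haj)]
        exact hia
    rw [hfe, Finset.card_product, Finset.card_singleton, mul_one]
  · -- j < i : inversions are pairs (j, b) with j < b < i
    have hfe : ((I ×ˢ I).filter
        (fun p => p.1 < p.2 ∧ Equiv.swap i j p.2 < Equiv.swap i j p.1)) =
        {j} ×ˢ (I.filter fun a => min i j < a ∧ a < max i j) := by
      ext ⟨a, b⟩
      simp only [Finset.mem_filter, Finset.mem_product, Finset.mem_singleton,
        min_eq_right hlt.le, max_eq_left hlt.le]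
      constructor
      · rintro ⟨⟨haI, hbI⟩, hab, hinv⟩
        rw [swap_apply_of_mem i j I hi haI, swap_apply_of_mem i j I hi hbI] at hinv
        have haj : a = j := by
          by_contra haj
          rw [if_neg haj] at hinv
          split_ifs at hinv with hbj
          · subst hbj; exact absurd (hinv.trans hab) (not_lt.mpr hlt.le)
          · exact absurd hinv (not_lt.mpr hab.le)
        have hab' : j < b := haj ▸ hab
        have hbj : b ≠ j := ne_of_gt hab'
        rw [haj, if_pos rfl, if_neg hbj] at hinv
        exact ⟨haj, hbI, hab', hinv⟩
      · rintro ⟨haj, hbI, hjb, hbi⟩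
        have haI : a ∈ I := by rw [haj]; exact hj
        refine ⟨⟨haI, hbI⟩, by rw [haj]; exact hjb, ?_⟩
        rw [swap_apply_of_mem i j I hi haI, swap_apply_of_mem i j I hi hbI,
          if_pos haj, if_neg (ne_of_gt hjb)]
        exact hbi
    rw [hfe, Finset.card_product, Finset.card_singleton, one_mul]

lemma exists_unique_idx (j : Fin n) (m : FermionIdx n k →₀ ℕ)
    (h : idxMultiplicity n k j m = 1) :
    ∃ I0 ∈ m.support, j ∈ I0.1 ∧ m I0 = 1 ∧
      ∀ I ∈ m.support, I ≠ I0 → j ∉ I.1 := by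
  classical
  have h' : ∑ I ∈ m.support, (if j ∈ I.1 then m I else 0) = 1 := h
  set T := m.support.filter (fun I => j ∈ I.1) with hT
  have hsum : ∑ I ∈ T, m I = 1 := by
    rw [hT, Finset.sum_filter]; exact h'
  have hle : T.card ≤ 1 := by
    calc T.card = ∑ _I ∈ T, 1 := by rw [Finset.card_eq_sum_ones]
    _ ≤ ∑ I ∈ T, m I := Finset.sum_le_sum (fun I hI => by
        have : I ∈ m.support := Finset.mem_of_mem_filter _ hI
        exact Nat.one_le_iff_ne_zero.mpr (Finsupp.mem_support_iff.mp this))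
    _ = 1 := hsum
  have hne : T.Nonempty := by
    by_contra hc
    rw [Finset.not_nonempty_iff_eq_empty] at hc
    rw [hc, Finset.sum_empty] at hsum
    exact absurd hsum one_ne_zero.symm.elim
  have hcard : T.card = 1 := le_antisymm hle (Finset.card_pos.mpr hne)
  obtain ⟨I0, hI0⟩ := Finset.card_eq_one.mp hcard
  have hI0T : I0 ∈ T := hI0 ▸ Finset.mem_singleton_self I0
  have hI0supp : I0 ∈ m.support := Finset.mem_of_mem_filter _ hI0T
  have hjI0 : j ∈ I0.1 := (Finset.mem_filter.mp hI0T).2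
  have hmI0 : m I0 = 1 := by
    rw [hI0, Finset.sum_singleton] at hsum; exact hsum
  refine ⟨I0, hI0supp, hjI0, hmI0, fun I hI hne hjI => ?_⟩
  have : I ∈ T := Finset.mem_filter.mpr ⟨hI, hjI⟩
  rw [hI0, Finset.mem_singleton] at this
  exact hne this

lemma transvect_monomial_key (i j : Fin n) (hij : i ≠ j) (s : ℂ)
    (m : FermionIdx n k →₀ ℕ) (c : ℂ)
    (hmj : idxMultiplicity n k j m = 1)
    (hmi : ∀ I ∈ m.support, i ∉ I.1) :
    transvect n k i j s (monomial m c)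
      = monomial m c + s • permAct n k (Equiv.swap i j) (monomial m c) := by
  classical
  obtain ⟨I0, hI0s, hjI0, hm1, huniq⟩ := exists_unique_idx j m hmj
  have hiI0 : i ∉ I0.1 := hmi I0 hI0s
  set π := Equiv.swap i j with hπ
  -- the target variable
  set J0 : FermionIdx n k := ⟨insert i (I0.1.erase j), by
    have hk : 0 < I0.1.card := Finset.card_pos.mpr ⟨j, hjI0⟩
    rw [Finset.card_insert_of_notMem
        (fun hm => hiI0 (Finset.mem_of_mem_erase hm)),
      Finset.card_erase_of_mem hjI0]
    rw [I0.2] at hk ⊢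
    omega⟩ with hJ0
  set cnt := ((I0.1.filter fun a => min i j < a ∧ a < max i j).card) with hcnt
  -- values of the two generator maps
  set fF : FermionIdx n k → FermionPoly n k := (fun I : FermionIdx n k =>
    if h : j ∈ I.1 ∧ i ∉ I.1 then
      MvPolynomial.X I +
        (((-1 : ℂ) ^ ((I.1.filter (fun a => min i j < a ∧ a < max i j)).card)) * s) •
          MvPolynomial.X (⟨insert i (I.1.erase j), by
            rcases h with ⟨hj, hi⟩
            have hk : 0 < I.1.card := Finset.card_pos.mpr ⟨j, hj⟩
            rw [Finset.card_insert_of_notMem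
                (fun hm => hi (Finset.mem_of_mem_erase hm)),
              Finset.card_erase_of_mem hj]
            rw [I.2] at hk ⊢
            omega⟩ : FermionIdx n k)
    else MvPolynomial.X I) with hfF
  set gF : FermionIdx n k → FermionPoly n k := (fun I : FermionIdx n k =>
    signEps n π I.1 •
      MvPolynomial.X (⟨I.1.image π, by
        rw [Finset.card_image_of_injective _ π.injective, I.2]⟩ : FermionIdx n k)) with hgF
  have htv : transvect n k i j s (monomial m c) = aeval fF (monomial m c) := rfl
  have hpa : permAct n k π (monomial m c) = aeval gF (monomial m c) := rfl
  -- values on variables away from I0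
  have hfF_other : ∀ I ∈ m.support.erase I0, fF I = X I := by
    intro I hI
    have hIs := Finset.mem_of_mem_erase hI
    have hne := Finset.ne_of_mem_erase hI
    have hjI : j ∉ I.1 := huniq I hIs hne
    simp only [hfF]
    exact dif_neg (fun hcon => hjI hcon.1)
  have hgF_other : ∀ I ∈ m.support.erase I0, gF I = X I := by
    intro I hI
    have hIs := Finset.mem_of_mem_erase hI
    have hne := Finset.ne_of_mem_erase hI
    have hjI : j ∉ I.1 := huniq I hIs hne
    have hiI : i ∉ I.1 := hmi I hIs
    simp only [hgF]
    have h1 : signEps n π I.1 = 1 := signEps_swap_of_not_mem i j I.1 hjI hiI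
    have h2 : (⟨I.1.image π, by
        rw [Finset.card_image_of_injective _ π.injective, I.2]⟩ : FermionIdx n k) = I :=
      Subtype.ext (image_swap_of_not_mem i j I.1 hjI hiI)
    rw [h1, h2, one_smul]
  have hfF_I0 : fF I0 = X I0 + (((-1 : ℂ) ^ cnt) * s) • X J0 := by
    simp only [hfF]
    rw [dif_pos ⟨hjI0, hiI0⟩]
  have hgF_I0 : gF I0 = ((-1 : ℂ) ^ cnt) • X J0 := by
    simp only [hgF]
    have h1 : signEps n π I0.1 = (-1 : ℂ) ^ cnt :=
      signEps_swap_of_mem i j hij I0.1 hjI0 hiI0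
    have h2 : (⟨I0.1.image π, by
        rw [Finset.card_image_of_injective _ π.injective, I0.2]⟩ : FermionIdx n k) = J0 :=
      Subtype.ext (image_swap_of_mem i j I0.1 hjI0 hiI0)
    rw [h1, h2]
  -- split the products
  set R : FermionPoly n k := ∏ I ∈ m.support.erase I0, X I ^ m I with hR
  have hprod : ∀ h : FermionIdx n k → FermionPoly n k,
      (∀ I ∈ m.support.erase I0, h I = X I) →
      (m.prod fun I e => h I ^ e) = h I0 * R := by
    intro h hh
    rw [Finsupp.prod, ← Finset.mul_prod_erase _ _ hI0s, hm1, pow_one, hR]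
    congr 1
    exact Finset.prod_congr rfl (fun I hI => by rw [hh I hI])
  have e1 : (m.prod fun I e => fF I ^ e) = fF I0 * R := hprod fF hfF_other
  have e2 : (m.prod fun I e => gF I ^ e) = gF I0 * R := hprod gF hgF_other
  have e3 : (m.prod fun I e => (X I : FermionPoly n k) ^ e) = X I0 * R :=
    hprod X (fun _ _ => rfl)
  rw [htv, hpa, aeval_monomial, aeval_monomial, e1, e2, hfF_I0, hgF_I0]
  rw [monomial_eq, e3]
  rw [MvPolynomial.algebraMap_eq]
  rw [smul_eq_C_mul, smul_eq_C_mul, smul_eq_C_mul]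
  simp only [map_mul]
  ring

end Aux

/-- Corollary: if `S` is good, `w ∈ S`, every monomial of `w`
contains the index `j` exactly once and `i` does not appear in `w`, then
`u_{ij}(s)·w` lies in the `ℂ`-linear span of `S` for every `s`. -/
theorem stmt_8 (n k : ℕ) (hn : 1 ≤ n) (hk1 : 1 ≤ k) (hkn : k ≤ n)
    (S : Set (FermionPoly n k)) (hS : IsGood n k S)
    (w : FermionPoly n k) (hwS : w ∈ S)
    (i j : Fin n) (hij : i ≠ j)
    (hj : ∀ mono ∈ w.support, idxMultiplicity n k j mono = 1)
    (hi : ¬ AppearsIn n k i w) :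
    ∀ s : ℂ, transvect n k i j s w ∈ Submodule.span ℂ S := by
  intro s
  classical
  have hmi : ∀ m ∈ w.support, ∀ I ∈ m.support, i ∉ I.1 := by
    intro m hm I hI hiI
    exact hi ⟨m, hm, I, hI, hiI⟩
  have key : transvect n k i j s w = w + s • permAct n k (Equiv.swap i j) w := by
    conv_lhs => rw [w.as_sum]
    rw [map_sum]
    rw [Finset.sum_congr rfl (fun m hm =>
      transvect_monomial_key i j hij s m (coeff m w) (hj m hm)
        (fun I hI => hmi m hm I hI))]
    rw [Finset.sum_add_distrib, ← Finset.smul_sum, ← map_sum, ← w.as_sum]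
  obtain ⟨v, hvS, c, hc⟩ := hS.1 (Equiv.swap i j) w hwS
  rw [key, hc, smul_smul]
  exact Submodule.add_mem _ (Submodule.subset_span hwS)
    (Submodule.smul_mem _ _ (Submodule.subset_span hvS))
end

section
/- Let n ≥ 1, let ψ be an n×n complex matrix with ψᵀ = −ψ, let g be an n×n complex unitary matrix (g·g* = 1), and set ψ' = g·ψ·gᵀ. Then Σ_{1≤i<j<k<l≤n} |ψ'_{ij}ψ'_{kl} + ψ'_{ik}ψ'_{lj} + ψ'_{il}ψ'_{jk}|² = Σ_{1≤i<j<k<l≤n} |ψ_{ij}ψ_{kl} + ψ_{ik}ψ_{lj} + ψ_{il}ψ_{jk}|². -/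
open Finset

namespace Stmt13Aux

variable {n : ℕ}

/-- The Plücker-type expression. -/
def Tc (ψ : Matrix (Fin n) (Fin n) ℂ) (a b c d : Fin n) : ℂ :=
  ψ a b * ψ c d + ψ a c * ψ d b + ψ a d * ψ b c

section antisym
variable {ψ : Matrix (Fin n) (Fin n) ℂ}

lemma Tc_swap01 (h : ∀ a b, ψ b a = -ψ a b) (a b c d : Fin n) :
    Tc ψ b a c d = -Tc ψ a b c d := by
  simp only [Tc]; linear_combination (ψ c d) * h a b + (ψ b c) * h a d + (ψ a c) * h b d

lemma Tc_swap12 (h : ∀ a b, ψ b a = -ψ a b) (a b c d : Fin n) :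
    Tc ψ a c b d = -Tc ψ a b c d := by
  simp only [Tc]; linear_combination (ψ a c) * h b d + (ψ a b) * h c d + (ψ a d) * h b c

lemma Tc_swap23 (h : ∀ a b, ψ b a = -ψ a b) (a b c d : Fin n) :
    Tc ψ a b d c = -Tc ψ a b c d := by
  simp only [Tc]; linear_combination (ψ a b) * h c d + (ψ a d) * h b c + (ψ a c) * h b d

lemma Tc_swap02 (h : ∀ a b, ψ b a = -ψ a b) (a b c d : Fin n) :
    Tc ψ c b a d = -Tc ψ a b c d := by
  simp only [Tc]; linear_combination (ψ a d) * h b c + (ψ d b) * h a c + (ψ c d) * h a b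

lemma Tc_swap03 (h : ∀ a b, ψ b a = -ψ a b) (a b c d : Fin n) :
    Tc ψ d b c a = -Tc ψ a b c d := by
  simp only [Tc]; linear_combination (ψ d b) * h a c + (ψ a b) * h c d + (ψ b c) * h a d

lemma Tc_swap13 (h : ∀ a b, ψ b a = -ψ a b) (a b c d : Fin n) :
    Tc ψ a d c b = -Tc ψ a b c d := by
  simp only [Tc]; linear_combination (ψ a d) * h b c + (ψ a c) * h b d + (ψ a b) * h c d

lemma Tc_eq01 (h : ∀ a b, ψ b a = -ψ a b) (a c d : Fin n) : Tc ψ a a c d = 0 := by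
  simp only [Tc]; linear_combination (ψ c d / 2) * h a a + (ψ a c) * h a d
lemma Tc_eq02 (h : ∀ a b, ψ b a = -ψ a b) (a b d : Fin n) : Tc ψ a b a d = 0 := by
  simp only [Tc]; linear_combination (ψ a d) * h a b + (ψ d b / 2) * h a a
lemma Tc_eq03 (h : ∀ a b, ψ b a = -ψ a b) (a b c : Fin n) : Tc ψ a b c a = 0 := by
  simp only [Tc]; linear_combination (ψ a b) * h a c + (ψ b c / 2) * h a a
lemma Tc_eq12 (h : ∀ a b, ψ b a = -ψ a b) (a b d : Fin n) : Tc ψ a b b d = 0 := by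
  simp only [Tc]; linear_combination (ψ a b) * h b d + (ψ a d / 2) * h b b
lemma Tc_eq13 (h : ∀ a b, ψ b a = -ψ a b) (a b c : Fin n) : Tc ψ a b c b = 0 := by
  simp only [Tc]; linear_combination (ψ a b) * h b c + (ψ a c / 2) * h b b
lemma Tc_eq23 (h : ∀ a b, ψ b a = -ψ a b) (a b c : Fin n) : Tc ψ a b c c = 0 := by
  simp only [Tc]; linear_combination (ψ a b / 2) * h c c + (ψ a c) * h b c

end antisym

def Tv (ψ : Matrix (Fin n) (Fin n) ℂ) (v : Fin 4 → Fin n) : ℂ :=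
  Tc ψ (v 0) (v 1) (v 2) (v 3)

variable {ψ ψ' g : Matrix (Fin n) (Fin n) ℂ}

lemma Tv_swap (h : ∀ a b, ψ b a = -ψ a b) (v : Fin 4 → Fin n) (x y : Fin 4) :
    Complex.normSq (Tv ψ (v ∘ Equiv.swap x y)) = Complex.normSq (Tv ψ v) := by
  fin_cases x <;> fin_cases y <;>
    simp only [Tv, Function.comp_apply, Equiv.swap_apply_def, Fin.isValue] <;>
    norm_num <;>
    first
      | rfl
      | (rw [Tc_swap01 h]; exact Complex.normSq_neg _)
      | (rw [Tc_swap12 h]; exact Complex.normSq_neg _)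
      | (rw [Tc_swap23 h]; exact Complex.normSq_neg _)
      | (rw [Tc_swap02 h]; exact Complex.normSq_neg _)
      | (rw [Tc_swap03 h]; exact Complex.normSq_neg _)
      | (rw [Tc_swap13 h]; exact Complex.normSq_neg _)

lemma Tv_perm (h : ∀ a b, ψ b a = -ψ a b) (σ : Equiv.Perm (Fin 4)) :
    ∀ v : Fin 4 → Fin n,
      Complex.normSq (Tv ψ (v ∘ σ)) = Complex.normSq (Tv ψ v) := by
  refine Equiv.Perm.swap_induction_on σ (fun v => by simp) ?_
  intro f x y hxy ih v
  have hc : v ∘ ⇑(Equiv.swap x y * f) = (v ∘ Equiv.swap x y) ∘ f := rfl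
  rw [hc, ih, Tv_swap h]

lemma Tv_ne_inj (h : ∀ a b, ψ b a = -ψ a b) {v : Fin 4 → Fin n}
    (hv : ¬ Function.Injective v) : Tv ψ v = 0 := by
  rw [Function.Injective] at hv
  push_neg at hv
  obtain ⟨i, j, hij, hne⟩ := hv
  fin_cases i <;> fin_cases j <;> norm_num at hij hne <;>
    rw [Tv] <;>
    first
      | (rw [show v 0 = v 1 from hij]; exact Tc_eq01 h _ _ _)
      | (rw [show v 1 = v 0 from hij]; exact Tc_eq01 h _ _ _)
      | (rw [show v 0 = v 2 from hij]; exact Tc_eq02 h _ _ _)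
      | (rw [show v 2 = v 0 from hij]; exact Tc_eq02 h _ _ _)
      | (rw [show v 0 = v 3 from hij]; exact Tc_eq03 h _ _ _)
      | (rw [show v 3 = v 0 from hij]; exact Tc_eq03 h _ _ _)
      | (rw [show v 1 = v 2 from hij]; exact Tc_eq12 h _ _ _)
      | (rw [show v 2 = v 1 from hij]; exact Tc_eq12 h _ _ _)
      | (rw [show v 1 = v 3 from hij]; exact Tc_eq13 h _ _ _)
      | (rw [show v 3 = v 1 from hij]; exact Tc_eq13 h _ _ _)
      | (rw [show v 2 = v 3 from hij]; exact Tc_eq23 h _ _ _)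
      | (rw [show v 3 = v 2 from hij]; exact Tc_eq23 h _ _ _)

/-! ### Sum reordering helpers -/

lemma sum3_rot (f : Fin n → Fin n → Fin n → ℂ) :
    (∑ c, ∑ d, ∑ b, f b c d) = ∑ b, ∑ c, ∑ d, f b c d := by
  have h1 : ∀ c, (∑ d, ∑ b, f b c d) = ∑ b, ∑ d, f b c d := fun c => Finset.sum_comm
  simp_rw [h1]; exact Finset.sum_comm

lemma sum3_rot' (f : Fin n → Fin n → Fin n → ℂ) :
    (∑ d, ∑ b, ∑ c, f b c d) = ∑ b, ∑ c, ∑ d, f b c d := by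
  have h1 : (∑ d, ∑ b, ∑ c, f b c d) = ∑ b, ∑ d, ∑ c, f b c d := Finset.sum_comm
  rw [h1]; exact Finset.sum_congr rfl fun b _ => Finset.sum_comm

lemma sum4_acdb (f : Fin n → Fin n → Fin n → Fin n → ℂ) :
    (∑ a, ∑ c, ∑ d, ∑ b, f a b c d) = ∑ a, ∑ b, ∑ c, ∑ d, f a b c d :=
  Finset.sum_congr rfl fun a _ => sum3_rot (fun b c d => f a b c d)

lemma sum4_adbc (f : Fin n → Fin n → Fin n → Fin n → ℂ) :
    (∑ a, ∑ d, ∑ b, ∑ c, f a b c d) = ∑ a, ∑ b, ∑ c, ∑ d, f a b c d :=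
  Finset.sum_congr rfl fun a _ => sum3_rot' (fun b c d => f a b c d)

lemma mul4 (X Y : Fin n → Fin n → ℂ) :
    (∑ a, ∑ b, X a b) * (∑ c, ∑ d, Y c d) = ∑ a, ∑ b, ∑ c, ∑ d, X a b * Y c d := by
  rw [Finset.sum_mul]
  refine Finset.sum_congr rfl fun a _ => ?_
  rw [Finset.sum_mul]
  refine Finset.sum_congr rfl fun b _ => ?_
  rw [Finset.mul_sum]
  refine Finset.sum_congr rfl fun c _ => ?_
  rw [Finset.mul_sum]

/-! ### The transformed tensor -/

lemma psi'_apply (hψ' : ψ' = g * ψ * g.transpose) (i j : Fin n) :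
    ψ' i j = ∑ a, ∑ b, g i a * ψ a b * g j b := by
  subst hψ'
  simp only [Matrix.mul_apply, Matrix.transpose_apply, Finset.sum_mul]
  rw [Finset.sum_comm]

lemma key (hψ' : ψ' = g * ψ * g.transpose) (i j k l : Fin n) :
    Tc ψ' i j k l
      = ∑ a, ∑ b, ∑ c, ∑ d, g i a * g j b * g k c * g l d * Tc ψ a b c d := by
  have h1 : ψ' i j * ψ' k l
      = ∑ a, ∑ b, ∑ c, ∑ d,
          (g i a * ψ a b * g j b) * (g k c * ψ c d * g l d) := by
    rw [psi'_apply hψ' i j, psi'_apply hψ' k l, mul4]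
  have h2 : ψ' i k * ψ' l j
      = ∑ a, ∑ b, ∑ c, ∑ d,
          (g i a * ψ a c * g k c) * (g l d * ψ d b * g j b) := by
    rw [psi'_apply hψ' i k, psi'_apply hψ' l j, mul4]
    exact sum4_acdb fun a b c d => (g i a * ψ a c * g k c) * (g l d * ψ d b * g j b)
  have h3 : ψ' i l * ψ' j k
      = ∑ a, ∑ b, ∑ c, ∑ d,
          (g i a * ψ a d * g l d) * (g j b * ψ b c * g k c) := by
    rw [psi'_apply hψ' i l, psi'_apply hψ' j k, mul4]
    exact sum4_adbc fun a b c d => (g i a * ψ a d * g l d) * (g j b * ψ b c * g k c)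
  rw [Tc, h1, h2, h3, ← Finset.sum_add_distrib, ← Finset.sum_add_distrib]
  refine Finset.sum_congr rfl fun a _ => ?_
  rw [← Finset.sum_add_distrib, ← Finset.sum_add_distrib]
  refine Finset.sum_congr rfl fun b _ => ?_
  rw [← Finset.sum_add_distrib, ← Finset.sum_add_distrib]
  refine Finset.sum_congr rfl fun c _ => ?_
  rw [← Finset.sum_add_distrib, ← Finset.sum_add_distrib]
  refine Finset.sum_congr rfl fun d _ => ?_
  rw [Tc]; ring

/-! ### The big unitary matrix -/

def e4 : (Fin n × Fin n × Fin n × Fin n) ≃ (Fin 4 → Fin n) where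
  toFun q := ![q.1, q.2.1, q.2.2.1, q.2.2.2]
  invFun v := (v 0, v 1, v 2, v 3)
  left_inv := by rintro ⟨a, b, c, d⟩; rfl
  right_inv := by intro v; funext i; fin_cases i <;> rfl

lemma sum_V (f : (Fin 4 → Fin n) → ℂ) :
    (∑ w : Fin 4 → Fin n, f w) = ∑ a, ∑ b, ∑ c, ∑ d, f ![a, b, c, d] := by
  rw [← Fintype.sum_equiv (e4 (n := n)) (fun q => f (e4 q)) f (fun q => rfl)]
  simp [Fintype.sum_prod_type, e4]

def Umat (g : Matrix (Fin n) (Fin n) ℂ) : Matrix (Fin 4 → Fin n) (Fin 4 → Fin n) ℂ :=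
  fun v w => ∏ i, g (v i) (w i)

lemma Umat_apply (g : Matrix (Fin n) (Fin n) ℂ) (v : Fin 4 → Fin n) (a b c d : Fin n) :
    Umat g v ![a, b, c, d] = g (v 0) a * g (v 1) b * g (v 2) c * g (v 3) d := by
  simp [Umat, Fin.prod_univ_four]

lemma Umat_unitary (g : Matrix (Fin n) (Fin n) ℂ) (hg : g * g.conjTranspose = 1) :
    Umat g * (Umat g).conjTranspose = 1 := by
  ext v w
  simp only [Matrix.mul_apply, Matrix.conjTranspose_apply, Umat]
  have hstar : ∀ r : Fin 4 → Fin n,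
      (∏ i, g (v i) (r i)) * star (∏ i, g (w i) (r i))
        = ∏ i, (g (v i) (r i) * star (g (w i) (r i))) := by
    intro r
    rw [star_prod, ← Finset.prod_mul_distrib]
  simp_rw [hstar]
  rw [← Fintype.piFinset_univ,
    ← Finset.prod_univ_sum (t := fun _ : Fin 4 => (univ : Finset (Fin n)))
      (f := fun i a => g (v i) a * star (g (w i) a))]
  have hfac : ∀ i : Fin 4, (∑ a, g (v i) a * star (g (w i) a))
      = (1 : Matrix (Fin n) (Fin n) ℂ) (v i) (w i) := by
    intro i
    rw [← hg, Matrix.mul_apply]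
    simp [Matrix.conjTranspose_apply]
  simp_rw [hfac]
  by_cases hvw : v = w
  · subst hvw; simp [Matrix.one_apply]
  · obtain ⟨i, hi⟩ := Function.ne_iff.mp hvw
    rw [Finset.prod_eq_zero (Finset.mem_univ i) (by simp [Matrix.one_apply, hi]),
      Matrix.one_apply_ne hvw]

lemma dot_inv (U : Matrix (Fin 4 → Fin n) (Fin 4 → Fin n) ℂ)
    (hU : U * U.conjTranspose = 1) (w : (Fin 4 → Fin n) → ℂ) :
    (∑ v, Complex.normSq (U.mulVec w v) : ℝ) = ∑ v, Complex.normSq (w v) := by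
  have hU' : U.conjTranspose * U = 1 := mul_eq_one_comm.mp hU
  have hC : (∑ v, (U.mulVec w v * star (U.mulVec w v))) = ∑ v, w v * star (w v) := by
    have h1 : (∑ v, (U.mulVec w v * star (U.mulVec w v)))
        = dotProduct (U.mulVec w) (star (U.mulVec w)) := rfl
    have h2 : (∑ v, w v * star (w v)) = dotProduct w (star w) := rfl
    rw [h1, h2, Matrix.star_mulVec, dotProduct_comm,
      Matrix.dotProduct_mulVec, Matrix.vecMul_vecMul, hU', Matrix.vecMul_one,
      dotProduct_comm]
  have hz : ∀ z : ℂ, z * star z = (Complex.normSq z : ℂ) := fun z => Complex.mul_conj z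
  simp_rw [hz, ← Complex.ofReal_sum] at hC
  exact_mod_cast hC

lemma sumA (hg : g * g.conjTranspose = 1) (hψ' : ψ' = g * ψ * g.transpose) :
    (∑ v, Complex.normSq (Tv ψ' v) : ℝ) = ∑ v, Complex.normSq (Tv ψ v) := by
  have hmv : (fun v => Tv ψ' v) = (Umat g).mulVec (fun v => Tv ψ v) := by
    funext v
    rw [Matrix.mulVec, dotProduct, sum_V (fun w => Umat g v w * Tv ψ w)]
    simp_rw [Umat_apply]
    have hT : ∀ a b c d : Fin n, Tv ψ ![a, b, c, d] = Tc ψ a b c d := fun a b c d => rfl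
    simp_rw [hT]
    exact key hψ' (v 0) (v 1) (v 2) (v 3)
  have : ∀ v, Tv ψ' v = (Umat g).mulVec (fun v => Tv ψ v) v := fun v => congrFun hmv v
  simp_rw [this]
  exact dot_inv _ (Umat_unitary g hg) _

/-! ### Counting: full sum = 24 × ordered sum -/

def Ord (w : Fin 4 → Fin n) : Prop := w 0 < w 1 ∧ w 1 < w 2 ∧ w 2 < w 3

instance : DecidablePred (Ord (n := n)) := fun w => by unfold Ord; infer_instance

lemma ord_strictMono {w : Fin 4 → Fin n} (h : Ord w) : StrictMono w := by
  rw [Fin.strictMono_iff_lt_succ]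
  intro i
  fin_cases i
  exacts [h.1, h.2.1, h.2.2]

lemma strictMono_ord {w : Fin 4 → Fin n} (h : StrictMono w) : Ord w :=
  ⟨h (by decide), h (by decide), h (by decide)⟩

lemma sort_comp (σ : Equiv.Perm (Fin 4)) {w : Fin 4 → Fin n} (hw : Ord w) :
    Tuple.sort (w ∘ σ) = σ⁻¹ := by
  have hsm := ord_strictMono hw
  symm
  rw [Tuple.eq_sort_iff]
  constructor
  · have : (w ∘ σ) ∘ ⇑σ⁻¹ = w := by
      funext x; simp [Function.comp]
    rw [this]; exact hsm.monotone
  · intro i j hij hfij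
    exfalso
    have : i = j := hsm.injective (by simpa [Function.comp] using hfij)
    exact hij.ne this

lemma inj_sum_eq (F : (Fin 4 → Fin n) → ℝ) :
    ∑ v ∈ univ.filter (fun v : Fin 4 → Fin n => Function.Injective v), F v
      = ∑ p ∈ (univ : Finset (Equiv.Perm (Fin 4))) ×ˢ
            univ.filter (fun w : Fin 4 → Fin n => Ord w), F (p.2 ∘ p.1) := by
  refine Finset.sum_nbij' (i := fun v => ((Tuple.sort v)⁻¹, v ∘ Tuple.sort v))
    (j := fun p => p.2 ∘ p.1) ?_ ?_ ?_ ?_ ?_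
  · intro v hv
    simp only [Finset.mem_filter, Finset.mem_univ, true_and] at hv
    rw [Finset.mem_product]
    refine ⟨Finset.mem_univ _, ?_⟩
    simp only [Finset.mem_filter, Finset.mem_univ, true_and]
    have hmono : Monotone (v ∘ Tuple.sort v) := Tuple.monotone_sort v
    have hinj : Function.Injective (v ∘ Tuple.sort v) :=
      hv.comp (Tuple.sort v).injective
    exact strictMono_ord (hmono.strictMono_of_injective hinj)
  · intro p hp
    rw [Finset.mem_product] at hp
    simp only [Finset.mem_filter, Finset.mem_univ, true_and] at hp ⊢
    exact (ord_strictMono (show Ord p.2 from hp)).injective.comp p.1.injective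
  · intro v hv
    funext x
    simp [Function.comp, Equiv.Perm.inv_def]
  · intro p hp
    rw [Finset.mem_product] at hp
    simp only [Finset.mem_filter, Finset.mem_univ, true_and] at hp
    have hs : Tuple.sort (p.2 ∘ p.1) = (p.1)⁻¹ := sort_comp p.1 (show Ord p.2 from hp)
    have h1 : (Tuple.sort (p.2 ∘ ⇑p.1))⁻¹ = p.1 := by rw [hs]; simp
    have h2 : (p.2 ∘ ⇑p.1) ∘ ⇑(Tuple.sort (p.2 ∘ ⇑p.1)) = p.2 := by
      rw [hs]; funext x; simp [Function.comp, Equiv.Perm.inv_def]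
    exact Prod.ext h1 h2
  · intro v hv
    congr 1
    funext x
    simp [Function.comp, Equiv.Perm.inv_def]

lemma fullsum (h : ∀ a b, ψ b a = -ψ a b) :
    (∑ v : Fin 4 → Fin n, Complex.normSq (Tv ψ v))
      = 24 * ∑ q ∈ Finset.univ.filter
          (fun q : Fin n × Fin n × Fin n × Fin n =>
            q.1 < q.2.1 ∧ q.2.1 < q.2.2.1 ∧ q.2.2.1 < q.2.2.2),
          Complex.normSq (Tc ψ q.1 q.2.1 q.2.2.1 q.2.2.2) := by
  have e1 : (∑ v : Fin 4 → Fin n, Complex.normSq (Tv ψ v))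
      = ∑ v ∈ univ.filter (fun v : Fin 4 → Fin n => Function.Injective v),
          Complex.normSq (Tv ψ v) := by
    symm
    refine Finset.sum_filter_of_ne fun v _ hne => ?_
    by_contra hni
    exact hne (by rw [Tv_ne_inj h hni]; simp)
  rw [e1, inj_sum_eq (fun v => Complex.normSq (Tv ψ v)), Finset.sum_product]
  have hperm : ∀ σ : Equiv.Perm (Fin 4),
      (∑ w ∈ univ.filter (fun w : Fin 4 → Fin n => Ord w),
          Complex.normSq (Tv ψ (w ∘ σ)))
        = ∑ w ∈ univ.filter (fun w : Fin 4 → Fin n => Ord w),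
            Complex.normSq (Tv ψ w) :=
    fun σ => Finset.sum_congr rfl fun w _ => Tv_perm h σ w
  simp_rw [hperm]
  rw [Finset.sum_const, Finset.card_univ, Fintype.card_perm, nsmul_eq_mul]
  have hcard : ((Fintype.card (Fin 4)).factorial : ℝ) = 24 := by
    simp [Nat.factorial]
  rw [hcard]
  congr 1
  refine (Finset.sum_equiv (e4 (n := n)) ?_ ?_).symm
  · intro q
    simp only [Finset.mem_filter, Finset.mem_univ, true_and]
    constructor
    · rintro ⟨h1, h2, h3⟩
      exact ⟨by simpa [e4] using h1, by simpa [e4] using h2, by simpa [e4] using h3⟩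
    · rintro ⟨h1, h2, h3⟩
      exact ⟨by simpa [e4, Ord] using h1, by simpa [e4, Ord] using h2,
        by simpa [e4, Ord] using h3⟩
  · intro q _
    rfl

end Stmt13Aux

open Stmt13Aux in
/-- the quantity
`Σ_{i<j<k<l} |ψ_{ij}ψ_{kl} + ψ_{ik}ψ_{lj} + ψ_{il}ψ_{jk}|²` of an antisymmetric
matrix `ψ` is invariant under `ψ ↦ gψgᵀ` for unitary `g`. -/
theorem stmt_13 (n : ℕ) (hn : 1 ≤ n)
    (ψ : Matrix (Fin n) (Fin n) ℂ) (hψ : ψ.transpose = -ψ)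
    (g : Matrix (Fin n) (Fin n) ℂ) (hg : g * g.conjTranspose = 1)
    (ψ' : Matrix (Fin n) (Fin n) ℂ) (hψ' : ψ' = g * ψ * g.transpose) :
    ∑ q ∈ Finset.univ.filter
        (fun q : Fin n × Fin n × Fin n × Fin n =>
          q.1 < q.2.1 ∧ q.2.1 < q.2.2.1 ∧ q.2.2.1 < q.2.2.2),
      ‖ψ' q.1 q.2.1 * ψ' q.2.2.1 q.2.2.2
        + ψ' q.1 q.2.2.1 * ψ' q.2.2.2 q.2.1
        + ψ' q.1 q.2.2.2 * ψ' q.2.1 q.2.2.1‖ ^ 2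
    = ∑ q ∈ Finset.univ.filter
        (fun q : Fin n × Fin n × Fin n × Fin n =>
          q.1 < q.2.1 ∧ q.2.1 < q.2.2.1 ∧ q.2.2.1 < q.2.2.2),
      ‖ψ q.1 q.2.1 * ψ q.2.2.1 q.2.2.2
        + ψ q.1 q.2.2.1 * ψ q.2.2.2 q.2.1
        + ψ q.1 q.2.2.2 * ψ q.2.1 q.2.2.1‖ ^ 2 := by
  have h : ∀ a b, ψ b a = -ψ a b := by
    intro a b
    have := congrFun (congrFun hψ a) b
    simpa [Matrix.transpose_apply] using this
  have hT' : ψ'.transpose = -ψ' := by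
    rw [hψ', Matrix.transpose_mul, Matrix.transpose_mul, Matrix.transpose_transpose, hψ]
    simp [Matrix.neg_mul, Matrix.mul_neg, Matrix.mul_assoc]
  have h' : ∀ a b, ψ' b a = -ψ' a b := by
    intro a b
    have := congrFun (congrFun hT' a) b
    simpa [Matrix.transpose_apply] using this
  simp only [Complex.sq_norm]
  have e1 := fullsum (ψ := ψ') h'
  have e2 := fullsum (ψ := ψ) h
  have e3 := sumA (ψ := ψ) (ψ' := ψ') (g := g) hg hψ'
  have key24 : (24 : ℝ) * (∑ q ∈ Finset.univ.filter
        (fun q : Fin n × Fin n × Fin n × Fin n =>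
          q.1 < q.2.1 ∧ q.2.1 < q.2.2.1 ∧ q.2.2.1 < q.2.2.2),
        Complex.normSq (Tc ψ' q.1 q.2.1 q.2.2.1 q.2.2.2))
      = 24 * ∑ q ∈ Finset.univ.filter
        (fun q : Fin n × Fin n × Fin n × Fin n =>
          q.1 < q.2.1 ∧ q.2.1 < q.2.2.1 ∧ q.2.2.1 < q.2.2.2),
        Complex.normSq (Tc ψ q.1 q.2.1 q.2.2.1 q.2.2.2) := by
    rw [← e1, ← e2]; exact e3
  exact mul_left_cancel₀ (by norm_num : (24 : ℝ) ≠ 0) key24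
end

section
/- Let n ≥ 1, let ψ be an n×n complex matrix with ψᵀ = −ψ, let g be an n×n complex unitary matrix, and set ψ' = g·ψ·gᵀ. For a 6-element subset I = {i₁ < i₂ < ⋯ < i₆} of {1,…,n} define Pf_I(ψ) = Σ_{π∈S₆} sgn(π)·ψ_{i_{π(1)} i_{π(2)}}·ψ_{i_{π(3)} i_{π(4)}}·ψ_{i_{π(5)} i_{π(6)}}. Then Σ_{I ⊆ {1,…,n}, |I|=6} |Pf_I(ψ')|² = Σ_{I ⊆ {1,…,n}, |I|=6} |Pf_I(ψ)|². -/
/-- For a 6-element subset `I = {i₁ < ⋯ < i₆}` of `{1,…,n}`, the quantity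
`Pf_I(ψ) = Σ_{π∈S₆} sgn(π)·ψ_{i_{π(1)}i_{π(2)}}·ψ_{i_{π(3)}i_{π(4)}}·ψ_{i_{π(5)}i_{π(6)}}`. -/
noncomputable def pfSix (n : ℕ) (ψ : Matrix (Fin n) (Fin n) ℂ)
    (I : Finset (Fin n)) (hI : I.card = 6) : ℂ :=
  ∑ π : Equiv.Perm (Fin 6),
    ((Equiv.Perm.sign π : ℤ) : ℂ)
      * ψ (I.orderIsoOfFin hI (π 0) : Fin n) (I.orderIsoOfFin hI (π 1) : Fin n)
      * ψ (I.orderIsoOfFin hI (π 2) : Fin n) (I.orderIsoOfFin hI (π 3) : Fin n)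
      * ψ (I.orderIsoOfFin hI (π 4) : Fin n) (I.orderIsoOfFin hI (π 5) : Fin n)

/-- The same Pfaffian-type sum, for an arbitrary 6-tuple of indices. -/
noncomputable def pfTup {n : ℕ} (ψ : Matrix (Fin n) (Fin n) ℂ) (x : Fin 6 → Fin n) : ℂ :=
  ∑ π : Equiv.Perm (Fin 6),
    ((Equiv.Perm.sign π : ℤ) : ℂ)
      * ψ (x (π 0)) (x (π 1)) * ψ (x (π 2)) (x (π 3)) * ψ (x (π 4)) (x (π 5))

lemma pfSix_eq_pfTup {n : ℕ} (ψ : Matrix (Fin n) (Fin n) ℂ)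
    (I : Finset (Fin n)) (hI : I.card = 6) :
    pfSix n ψ I hI = pfTup ψ (fun t => (I.orderIsoOfFin hI t : Fin n)) := rfl

lemma pfTup_comp {n : ℕ} (ψ : Matrix (Fin n) (Fin n) ℂ) (x : Fin 6 → Fin n)
    (σ : Equiv.Perm (Fin 6)) :
    pfTup ψ (x ∘ σ) = ((Equiv.Perm.sign σ : ℤ) : ℂ) * pfTup ψ x := by
  unfold pfTup
  rw [Finset.mul_sum]
  refine Fintype.sum_equiv (Equiv.mulLeft σ) _ _ fun π => ?_
  have hs : ((Equiv.Perm.sign π : ℤ) : ℂ)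
      = ((Equiv.Perm.sign σ : ℤ) : ℂ) * ((Equiv.Perm.sign (σ * π) : ℤ) : ℂ) := by
    rw [Equiv.Perm.sign_mul]
    push_cast
    rcases Int.units_eq_one_or (Equiv.Perm.sign σ) with h | h <;>
      rcases Int.units_eq_one_or (Equiv.Perm.sign π) with h' | h' <;>
        simp [h, h']
  simp only [Equiv.coe_mulLeft, Function.comp_apply, Equiv.Perm.mul_apply]
  rw [hs]; ring

lemma pfTup_eq_zero {n : ℕ} (ψ : Matrix (Fin n) (Fin n) ℂ) (x : Fin 6 → Fin n)
    (hx : ¬ Function.Injective x) : pfTup ψ x = 0 := by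
  obtain ⟨i, j, hxij, hij⟩ := Function.not_injective_iff.mp hx
  have hcomp : x ∘ (Equiv.swap i j) = x := by
    funext t
    rcases eq_or_ne t i with rfl | hti
    · simp [Equiv.swap_apply_left, hxij]
    rcases eq_or_ne t j with rfl | htj
    · simp [Equiv.swap_apply_right, hxij]
    · simp [Equiv.swap_apply_of_ne_of_ne hti htj]
  have h := pfTup_comp ψ x (Equiv.swap i j)
  rw [hcomp, Equiv.Perm.sign_swap hij] at h
  push_cast at h
  have h2 : (2 : ℂ) * pfTup ψ x = 0 := by linear_combination h
  simpa using h2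

/-- Reindexing equivalence used to flatten sums over 6-tuples. -/
def tupEquiv (n : ℕ) : (Fin 6 → Fin n) ≃ (Fin n × Fin n × Fin n × Fin n × Fin n × Fin n) where
  toFun y := (y 4, y 5, y 2, y 3, y 0, y 1)
  invFun p := ![p.2.2.2.2.1, p.2.2.2.2.2, p.2.2.1, p.2.2.2.1, p.1, p.2.1]
  left_inv y := by funext t; fin_cases t <;> rfl
  right_inv p := rfl

lemma sum6 {n : ℕ} (F : Fin n → Fin n → Fin n → Fin n → Fin n → Fin n → ℂ) :
    (∑ a, ∑ b, ∑ c, ∑ d, ∑ e, ∑ f, F a b c d e f)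
      = ∑ y : Fin 6 → Fin n, F (y 4) (y 5) (y 2) (y 3) (y 0) (y 1) := by
  have h2 : (∑ p : Fin n × Fin n × Fin n × Fin n × Fin n × Fin n,
      F p.1 p.2.1 p.2.2.1 p.2.2.2.1 p.2.2.2.2.1 p.2.2.2.2.2)
      = ∑ a, ∑ b, ∑ c, ∑ d, ∑ e, ∑ f, F a b c d e f := by
    simp [Fintype.sum_prod_type]
  rw [← h2]
  exact (Fintype.sum_bijective (tupEquiv n) (tupEquiv n).bijective _
    (fun p => F p.1 p.2.1 p.2.2.1 p.2.2.2.1 p.2.2.2.2.1 p.2.2.2.2.2) (fun y => rfl)).symm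

lemma pfTup_transform {n : ℕ} (ψ g : Matrix (Fin n) (Fin n) ℂ) (x : Fin 6 → Fin n) :
    pfTup (g * ψ * g.transpose) x
      = ∑ y : Fin 6 → Fin n, (∏ t, g (x t) (y t)) * pfTup ψ y := by
  have entry : ∀ a b, (g * ψ * g.transpose) a b = ∑ c, ∑ d, g a c * g b d * ψ c d := by
    intro a b
    simp only [Matrix.mul_apply, Matrix.transpose_apply, Finset.sum_mul, Finset.mul_sum]
    rw [Finset.sum_comm]
    exact Finset.sum_congr rfl fun c _ => Finset.sum_congr rfl fun d _ => by ring
  have claim : ∀ π : Equiv.Perm (Fin 6),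
      ((Equiv.Perm.sign π : ℤ) : ℂ)
        * (g * ψ * g.transpose) (x (π 0)) (x (π 1))
        * (g * ψ * g.transpose) (x (π 2)) (x (π 3))
        * (g * ψ * g.transpose) (x (π 4)) (x (π 5))
      = ∑ y : Fin 6 → Fin n, (∏ t, g (x (π t)) (y t)) *
          (((Equiv.Perm.sign π : ℤ) : ℂ)
            * ψ (y 0) (y 1) * ψ (y 2) (y 3) * ψ (y 4) (y 5)) := by
    intro π
    simp only [entry, Finset.mul_sum, Finset.sum_mul, Fin.prod_univ_six]
    rw [sum6]
    exact Finset.sum_congr rfl fun y _ => by ring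
  calc pfTup (g * ψ * g.transpose) x
      = ∑ π : Equiv.Perm (Fin 6), ∑ y : Fin 6 → Fin n,
          (∏ t, g (x (π t)) (y t)) *
          (((Equiv.Perm.sign π : ℤ) : ℂ)
            * ψ (y 0) (y 1) * ψ (y 2) (y 3) * ψ (y 4) (y 5)) :=
        Finset.sum_congr rfl fun π _ => claim π
    _ = ∑ π : Equiv.Perm (Fin 6), ∑ z : Fin 6 → Fin n,
          (∏ t, g (x t) (z t)) *
          (((Equiv.Perm.sign π : ℤ) : ℂ)
            * ψ (z (π 0)) (z (π 1)) * ψ (z (π 2)) (z (π 3)) * ψ (z (π 4)) (z (π 5))) := by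
        refine Finset.sum_congr rfl fun π _ => ?_
        refine Fintype.sum_equiv (Equiv.arrowCongr π (Equiv.refl (Fin n))) _ _ fun y => ?_
        have hq : ∀ t, (Equiv.arrowCongr π (Equiv.refl (Fin n))) y t = y (π.symm t) := by
          intro t; simp [Equiv.arrowCongr]
        simp only [hq, Equiv.symm_apply_apply]
        rw [← Equiv.prod_comp π (fun t => g (x t) (y (Equiv.symm π t)))]
        simp [Equiv.symm_apply_apply]
    _ = ∑ z : Fin 6 → Fin n, (∏ t, g (x t) (z t)) * pfTup ψ z := by
        rw [Finset.sum_comm]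
        refine Finset.sum_congr rfl fun z _ => ?_
        rw [pfTup, Finset.mul_sum]

lemma horth {n : ℕ} (g : Matrix (Fin n) (Fin n) ℂ) (hg : g * g.conjTranspose = 1)
    (y z : Fin 6 → Fin n) :
    (∑ x : Fin 6 → Fin n,
        (∏ t, g (x t) (y t)) * (starRingEnd ℂ) (∏ t, g (x t) (z t)))
      = if z = y then 1 else 0 := by
  have hgg : g.conjTranspose * g = 1 := mul_eq_one_comm.mp hg
  have hcol : ∀ u v : Fin n,
      (∑ a, g a u * (starRingEnd ℂ) (g a v)) = if v = u then 1 else 0 := by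
    intro u v
    have : (g.conjTranspose * g) v u = (1 : Matrix (Fin n) (Fin n) ℂ) v u := by rw [hgg]
    rw [Matrix.mul_apply, Matrix.one_apply] at this
    rw [← this]
    exact Finset.sum_congr rfl fun a _ => by
      simp [Matrix.conjTranspose_apply]; ring
  calc (∑ x : Fin 6 → Fin n,
        (∏ t, g (x t) (y t)) * (starRingEnd ℂ) (∏ t, g (x t) (z t)))
      = ∑ x : Fin 6 → Fin n, ∏ t, (g (x t) (y t) * (starRingEnd ℂ) (g (x t) (z t))) := by
        refine Finset.sum_congr rfl fun x _ => ?_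
        rw [map_prod, Finset.prod_mul_distrib]
    _ = ∏ t : Fin 6, ∑ a, (g a (y t) * (starRingEnd ℂ) (g a (z t))) := by
        rw [Fintype.prod_sum (fun t a => g a (y t) * (starRingEnd ℂ) (g a (z t)))]
    _ = ∏ t : Fin 6, if z t = y t then (1:ℂ) else 0 := by
        exact Finset.prod_congr rfl fun t _ => hcol (y t) (z t)
    _ = if z = y then 1 else 0 := by
        by_cases h : z = y
        · simp [h]
        · obtain ⟨t, ht⟩ := Function.ne_iff.mp h
          rw [if_neg h]
          exact Finset.prod_eq_zero (Finset.mem_univ t) (by simp [ht])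

lemma tupsum_inv {n : ℕ} (ψ g : Matrix (Fin n) (Fin n) ℂ)
    (hg : g * g.conjTranspose = 1) :
    ∑ x : Fin 6 → Fin n, pfTup (g * ψ * g.transpose) x
        * (starRingEnd ℂ) (pfTup (g * ψ * g.transpose) x)
      = ∑ y : Fin 6 → Fin n, pfTup ψ y * (starRingEnd ℂ) (pfTup ψ y) := by
  simp only [pfTup_transform ψ g]
  calc ∑ x : Fin 6 → Fin n,
        (∑ y : Fin 6 → Fin n, (∏ t, g (x t) (y t)) * pfTup ψ y)
          * (starRingEnd ℂ) (∑ z : Fin 6 → Fin n, (∏ t, g (x t) (z t)) * pfTup ψ z)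
      = ∑ x : Fin 6 → Fin n, ∑ y : Fin 6 → Fin n, ∑ z : Fin 6 → Fin n,
          ((∏ t, g (x t) (y t)) * pfTup ψ y)
            * (starRingEnd ℂ) ((∏ t, g (x t) (z t)) * pfTup ψ z) := by
        refine Finset.sum_congr rfl fun x _ => ?_
        rw [map_sum, Finset.sum_mul_sum]
    _ = ∑ y : Fin 6 → Fin n, ∑ z : Fin 6 → Fin n,
          (∑ x : Fin 6 → Fin n, (∏ t, g (x t) (y t)) * (starRingEnd ℂ) (∏ t, g (x t) (z t)))
            * (pfTup ψ y * (starRingEnd ℂ) (pfTup ψ z)) := by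
        rw [Finset.sum_comm]
        refine Finset.sum_congr rfl fun y _ => ?_
        rw [Finset.sum_comm]
        refine Finset.sum_congr rfl fun z _ => ?_
        rw [Finset.sum_mul]
        refine Finset.sum_congr rfl fun x _ => ?_
        rw [map_mul]
        ring
    _ = ∑ y : Fin 6 → Fin n, ∑ z : Fin 6 → Fin n,
          (if z = y then (1:ℂ) else 0) * (pfTup ψ y * (starRingEnd ℂ) (pfTup ψ z)) := by
        refine Finset.sum_congr rfl fun y _ => Finset.sum_congr rfl fun z _ => ?_
        rw [horth g hg y z]
    _ = ∑ y : Fin 6 → Fin n, pfTup ψ y * (starRingEnd ℂ) (pfTup ψ y) := by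
        refine Finset.sum_congr rfl fun y _ => ?_
        simp

lemma decomp {n : ℕ} (ψ : Matrix (Fin n) (Fin n) ℂ) :
    ∑ x : Fin 6 → Fin n, pfTup ψ x * (starRingEnd ℂ) (pfTup ψ x)
    = ∑ I ∈ (Finset.powersetCard 6 (Finset.univ : Finset (Fin n))).attach,
        720 * (pfSix n ψ I.1 ((Finset.mem_powersetCard.mp I.2).2)
          * (starRingEnd ℂ) (pfSix n ψ I.1 ((Finset.mem_powersetCard.mp I.2).2))) := by
  classical
  set F : (Fin 6 → Fin n) → ℂ := fun x => pfTup ψ x * (starRingEnd ℂ) (pfTup ψ x) with hF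
  have step1 : ∑ x : Fin 6 → Fin n, F x
      = ∑ x ∈ Finset.univ.filter (fun x : Fin 6 → Fin n => Function.Injective x), F x := by
    rw [← Finset.sum_filter_add_sum_filter_not Finset.univ
      (fun x : Fin 6 → Fin n => Function.Injective x) F]
    have : ∑ x ∈ Finset.univ.filter
        (fun x : Fin 6 → Fin n => ¬ Function.Injective x), F x = 0 := by
      refine Finset.sum_eq_zero fun x hx => ?_
      rw [hF]
      simp [pfTup_eq_zero ψ x (Finset.mem_filter.mp hx).2]
    rw [this, add_zero]
  rw [step1]
  -- bijection between (subset, permutation) pairs and injective tuples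
  have key : ∑ p ∈ (Finset.powersetCard 6 (Finset.univ : Finset (Fin n))).attach ×ˢ
        (Finset.univ : Finset (Equiv.Perm (Fin 6))),
        F (fun t => (p.1.1.orderIsoOfFin ((Finset.mem_powersetCard.mp p.1.2).2) (p.2 t) : Fin n))
      = ∑ x ∈ Finset.univ.filter (fun x : Fin 6 → Fin n => Function.Injective x), F x := by
    refine Finset.sum_bij
      (fun p _ => fun t => (p.1.1.orderIsoOfFin ((Finset.mem_powersetCard.mp p.1.2).2) (p.2 t) : Fin n))
      ?_ ?_ ?_ (fun p hp => rfl)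
    · -- maps into injective
      rintro ⟨⟨I, hI⟩, σ⟩ -
      simp only [Finset.mem_filter, Finset.mem_univ, true_and]
      intro t s hts
      have := Subtype.coe_injective hts
      exact σ.injective ((I.orderIsoOfFin _).injective this)
    · -- injective
      intro p1 hp1 p2 hp2 h
      obtain ⟨⟨I, hI⟩, σ⟩ := p1
      obtain ⟨⟨J, hJ⟩, τ⟩ := p2
      have hIJ : I = J := by
        ext a
        constructor
        · intro ha
          have h1 := congrFun h (σ.symm ((I.orderIsoOfFin ((Finset.mem_powersetCard.mp hI).2)).symm ⟨a, ha⟩))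
          simp only [Equiv.apply_symm_apply, OrderIso.apply_symm_apply] at h1
          rw [h1]
          exact Finset.coe_mem _
        · intro ha
          have h1 := congrFun h (τ.symm ((J.orderIsoOfFin ((Finset.mem_powersetCard.mp hJ).2)).symm ⟨a, ha⟩))
          simp only [Equiv.apply_symm_apply, OrderIso.apply_symm_apply] at h1
          rw [← h1]
          exact Finset.coe_mem _
      subst hIJ
      refine Prod.ext (Subtype.ext rfl) ?_
      simp only
      refine Equiv.ext fun t => ?_
      have h1 := congrFun h t
      simp only at h1
      exact (I.orderIsoOfFin _).injective (Subtype.coe_injective h1)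
    · -- surjective
      intro x hx
      have hxinj : Function.Injective x := (Finset.mem_filter.mp hx).2
      set I : Finset (Fin n) := Finset.image x Finset.univ with hIdef
      have hIcard : I.card = 6 := by
        rw [hIdef, Finset.card_image_of_injective _ hxinj]
        simp
      have hImem : I ∈ Finset.powersetCard 6 (Finset.univ : Finset (Fin n)) :=
        Finset.mem_powersetCard.mpr ⟨Finset.subset_univ _, hIcard⟩
      have hmem : ∀ t, x t ∈ I := fun t => Finset.mem_image_of_mem x (Finset.mem_univ t)
      set u : Fin 6 → Fin 6 := fun t =>
        (I.orderIsoOfFin ((Finset.mem_powersetCard.mp hImem).2)).symm ⟨x t, hmem t⟩ with hu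
      have huinj : Function.Injective u := by
        intro a b hab
        apply hxinj
        have := (I.orderIsoOfFin ((Finset.mem_powersetCard.mp hImem).2)).symm.injective.eq_iff.mp hab
        exact Subtype.ext_iff.mp this
      have hubij : Function.Bijective u := Finite.injective_iff_bijective.mp huinj
      refine ⟨⟨⟨I, hImem⟩, Equiv.ofBijective u hubij⟩, Finset.mem_product.mpr
        ⟨Finset.mem_attach _ _, Finset.mem_univ _⟩, ?_⟩
      funext t
      simp only [Equiv.ofBijective_apply, hu, OrderIso.apply_symm_apply]
  rw [← key, Finset.sum_product]
  refine Finset.sum_congr rfl fun I _ => ?_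
  have hterm : ∀ σ : Equiv.Perm (Fin 6),
      F (fun t => (I.1.orderIsoOfFin ((Finset.mem_powersetCard.mp I.2).2) (σ t) : Fin n))
      = pfSix n ψ I.1 ((Finset.mem_powersetCard.mp I.2).2)
          * (starRingEnd ℂ) (pfSix n ψ I.1 ((Finset.mem_powersetCard.mp I.2).2)) := by
    intro σ
    have hcf : (fun t => (I.1.orderIsoOfFin ((Finset.mem_powersetCard.mp I.2).2) (σ t) : Fin n))
        = (fun t => (I.1.orderIsoOfFin ((Finset.mem_powersetCard.mp I.2).2) t : Fin n)) ∘ σ := rfl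
    rw [hF]
    simp only [hcf, pfTup_comp, pfSix_eq_pfTup, map_mul]
    have : (starRingEnd ℂ) ((Equiv.Perm.sign σ : ℤ) : ℂ) = ((Equiv.Perm.sign σ : ℤ) : ℂ) :=
      map_intCast _ _
    rw [this]
    rcases Int.units_eq_one_or (Equiv.Perm.sign σ) with h | h <;> rw [h] <;> push_cast <;> ring
  simp only [hterm]
  rw [Finset.sum_const, Finset.card_univ]
  have hcard : Fintype.card (Equiv.Perm (Fin 6)) = 720 := by
    rw [Fintype.card_perm, Fintype.card_fin]
    rfl
  rw [hcard, nsmul_eq_mul]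
  norm_num

/-- `Σ_{|I|=6} |Pf_I(ψ)|²` is invariant under `ψ ↦ gψgᵀ` for
unitary `g`. -/
theorem stmt_17 (n : ℕ) (hn : 1 ≤ n)
    (ψ : Matrix (Fin n) (Fin n) ℂ) (hψ : ψ.transpose = -ψ)
    (g : Matrix (Fin n) (Fin n) ℂ) (hg : g * g.conjTranspose = 1)
    (ψ' : Matrix (Fin n) (Fin n) ℂ) (hψ' : ψ' = g * ψ * g.transpose) :
    ∑ I ∈ (Finset.powersetCard 6 (Finset.univ : Finset (Fin n))).attach,
        ‖pfSix n ψ' I.1 ((Finset.mem_powersetCard.mp I.2).2)‖ ^ 2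
    = ∑ I ∈ (Finset.powersetCard 6 (Finset.univ : Finset (Fin n))).attach,
        ‖pfSix n ψ I.1 ((Finset.mem_powersetCard.mp I.2).2)‖ ^ 2 := by
  subst hψ'
  have h1 := (decomp (g * ψ * g.transpose)).symm.trans
    ((tupsum_inv ψ g hg).trans (decomp ψ))
  rw [← Finset.mul_sum, ← Finset.mul_sum] at h1
  have h2 := mul_left_cancel₀ (by norm_num : (720 : ℂ) ≠ 0) h1
  rw [← Complex.ofReal_inj]
  push_cast
  simp only [← Complex.ofReal_pow, Complex.sq_norm, ← Complex.mul_conj]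
  exact h2
end

section
/- Define, for coefficients ψ : {0,1}×{0,1}×{0,1} → ℂ, the quantity F(ψ) = Σ_{i,j,k∈{0,1}} |ψ_{ijk}|⁴ + 2·Σ_{i,j∈{0,1}} (|ψ_{ij0}ψ_{ij1}|² + |ψ_{i0j}ψ_{i1j}|² + |ψ_{0ij}ψ_{1ij}|²) + Σ_{i∈{0,1}} ( |ψ_{i01}ψ_{i10}|² + (1/3)|ψ_{i01}ψ_{i10} + 2ψ_{i00}ψ_{i11}|² + |ψ_{0i1}ψ_{1i0}|² + (1/3)|ψ_{0i1}ψ_{1i0} + 2ψ_{0i0}ψ_{1i1}|² + |ψ_{01i}ψ_{10i}|² + (1/3)|ψ_{01i}ψ_{10i} + 2ψ_{00i}ψ_{11i}|² ) + (1/2)|ψ_{000}ψ_{111}|² + (1/6)|ψ_{000}ψ_{111} + 2ψ_{001}ψ_{110}|² + (1/6)|ψ_{000}ψ_{111} + 2ψ_{011}ψ_{100}|² + (1/18)|ψ_{000}ψ_{111} − 2ψ_{001}ψ_{110} − 2ψ_{011}ψ_{100}|² + (1/9)|ψ_{000}ψ_{111} + ψ_{001}ψ_{110} + 3ψ_{010}ψ_{101}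 + ψ_{011}ψ_{100}|². Then: (1) if ψ_{000} = 1 and all other coefficients are 0 (a separable product state), F(ψ) = 1; (2) if ψ_{000} = ψ_{111} = 1/√2 and all other coefficients are 0 (the GHZ state), F(ψ) = 3/4; (3) if ψ_{001} = ψ_{010} = ψ_{100} = 1/√3 and all other coefficients are 0 (the W state), F(ψ) = 7/9; (4) if ψ_{000} = ψ_{011} = 1/√2 and all other coefficients are 0 (a biseparable state with a maximally entangled pair), F(ψ) = 5/6. -/
/-- The restriction `F` of the fermionic invariant `I_{(2,2,2)}` to
three-qubit states with coefficients `ψ_{ijk}`. -/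
noncomputable def threeQubitInv (ψ : Fin 2 → Fin 2 → Fin 2 → ℂ) : ℝ :=
  (∑ i : Fin 2, ∑ j : Fin 2, ∑ k : Fin 2, ‖ψ i j k‖ ^ 4)
  + 2 * ∑ i : Fin 2, ∑ j : Fin 2,
      (‖ψ i j 0 * ψ i j 1‖ ^ 2
        + ‖ψ i 0 j * ψ i 1 j‖ ^ 2
        + ‖ψ 0 i j * ψ 1 i j‖ ^ 2)
  + ∑ i : Fin 2,
      (‖ψ i 0 1 * ψ i 1 0‖ ^ 2
        + (1 / 3) * ‖ψ i 0 1 * ψ i 1 0 + 2 * ψ i 0 0 * ψ i 1 1‖ ^ 2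
        + ‖ψ 0 i 1 * ψ 1 i 0‖ ^ 2
        + (1 / 3) * ‖ψ 0 i 1 * ψ 1 i 0 + 2 * ψ 0 i 0 * ψ 1 i 1‖ ^ 2
        + ‖ψ 0 1 i * ψ 1 0 i‖ ^ 2
        + (1 / 3) * ‖ψ 0 1 i * ψ 1 0 i + 2 * ψ 0 0 i * ψ 1 1 i‖ ^ 2)
  + (1 / 2) * ‖ψ 0 0 0 * ψ 1 1 1‖ ^ 2
  + (1 / 6) * ‖ψ 0 0 0 * ψ 1 1 1 + 2 * ψ 0 0 1 * ψ 1 1 0‖ ^ 2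
  + (1 / 6) * ‖ψ 0 0 0 * ψ 1 1 1 + 2 * ψ 0 1 1 * ψ 1 0 0‖ ^ 2
  + (1 / 18) * ‖
      ψ 0 0 0 * ψ 1 1 1 - 2 * ψ 0 0 1 * ψ 1 1 0 - 2 * ψ 0 1 1 * ψ 1 0 0‖ ^ 2
  + (1 / 9) * ‖
      ψ 0 0 0 * ψ 1 1 1 + ψ 0 0 1 * ψ 1 1 0
        + 3 * ψ 0 1 0 * ψ 1 0 1 + ψ 0 1 1 * ψ 1 0 0‖ ^ 2

set_option maxHeartbeats 1000000 in
set_option linter.unnecessarySeqFocus false in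
/-- the values of the invariant on a separable state, the GHZ
state, the W state, and a biseparable state with a maximally entangled pair. -/
theorem stmt_18 :
    threeQubitInv (fun i j k => if i = 0 ∧ j = 0 ∧ k = 0 then 1 else 0) = 1 ∧
    threeQubitInv (fun i j k =>
      if (i = 0 ∧ j = 0 ∧ k = 0) ∨ (i = 1 ∧ j = 1 ∧ k = 1)
        then ((Real.sqrt 2 : ℂ))⁻¹ else 0) = 3 / 4 ∧
    threeQubitInv (fun i j k =>
      if (i = 0 ∧ j = 0 ∧ k = 1) ∨ (i = 0 ∧ j = 1 ∧ k = 0) ∨ (i = 1 ∧ j = 0 ∧ k = 0)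
        then ((Real.sqrt 3 : ℂ))⁻¹ else 0) = 7 / 9 ∧
    threeQubitInv (fun i j k =>
      if (i = 0 ∧ j = 0 ∧ k = 0) ∨ (i = 0 ∧ j = 1 ∧ k = 1)
        then ((Real.sqrt 2 : ℂ))⁻¹ else 0) = 5 / 6 := by
  refine ⟨?_, ?_, ?_, ?_⟩
  · set ψ : Fin 2 → Fin 2 → Fin 2 → ℂ :=
      (fun i j k => if i = 0 ∧ j = 0 ∧ k = 0 then 1 else 0) with hψ
    have h000 : ψ 0 0 0 = 1 := by norm_num [hψ]
    have h001 : ψ 0 0 1 = 0 := by norm_num [hψ]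
    have h010 : ψ 0 1 0 = 0 := by norm_num [hψ]
    have h011 : ψ 0 1 1 = 0 := by norm_num [hψ]
    have h100 : ψ 1 0 0 = 0 := by norm_num [hψ]
    have h101 : ψ 1 0 1 = 0 := by norm_num [hψ]
    have h110 : ψ 1 1 0 = 0 := by norm_num [hψ]
    have h111 : ψ 1 1 1 = 0 := by norm_num [hψ]
    simp only [threeQubitInv, Fin.sum_univ_two,
      h000, h001, h010, h011, h100, h101, h110, h111]
    norm_num
  · set s : ℝ := (Real.sqrt 2)⁻¹ with hs
    set ψ : Fin 2 → Fin 2 → Fin 2 → ℂ := (fun i j k =>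
        if (i = 0 ∧ j = 0 ∧ k = 0) ∨ (i = 1 ∧ j = 1 ∧ k = 1)
          then ((Real.sqrt 2 : ℂ))⁻¹ else 0) with hψ
    have hss : s * s = 2⁻¹ := by
      rw [hs, ← mul_inv, Real.mul_self_sqrt] <;> norm_num
    have h000 : ψ 0 0 0 = (s : ℂ) := by norm_num [hψ, hs]
    have h111 : ψ 1 1 1 = (s : ℂ) := by norm_num [hψ, hs]
    have h001 : ψ 0 0 1 = 0 := by norm_num [hψ]
    have h010 : ψ 0 1 0 = 0 := by norm_num [hψ]
    have h011 : ψ 0 1 1 = 0 := by norm_num [hψ]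
    have h100 : ψ 1 0 0 = 0 := by norm_num [hψ]
    have h101 : ψ 1 0 1 = 0 := by norm_num [hψ]
    have h110 : ψ 1 1 0 = 0 := by norm_num [hψ]
    have hs0 : 0 ≤ s := by positivity
    simp only [threeQubitInv, Fin.sum_univ_two,
      h000, h001, h010, h011, h100, h101, h110, h111]
    simp only [← Complex.ofReal_mul, hss, mul_zero, zero_mul, mul_one, add_zero,
      zero_add, norm_zero, Complex.norm_real, Real.norm_eq_abs, ne_eq, OfNat.ofNat_ne_zero,
      not_false_eq_true, zero_pow, sub_zero]
    rw [abs_of_nonneg hs0]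
    norm_num
    rw [hs, ← Real.sqrt_inv,
      show (Real.sqrt 2⁻¹) ^ 4 = ((Real.sqrt 2⁻¹) ^ 2) ^ 2 by ring, Real.sq_sqrt] <;>
      norm_num
  · set s : ℝ := (Real.sqrt 3)⁻¹ with hs
    set ψ : Fin 2 → Fin 2 → Fin 2 → ℂ := (fun i j k =>
        if (i = 0 ∧ j = 0 ∧ k = 1) ∨ (i = 0 ∧ j = 1 ∧ k = 0) ∨ (i = 1 ∧ j = 0 ∧ k = 0)
          then ((Real.sqrt 3 : ℂ))⁻¹ else 0) with hψ
    have hss : s * s = 3⁻¹ := by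
      rw [hs, ← mul_inv, Real.mul_self_sqrt] <;> norm_num
    have h001 : ψ 0 0 1 = (s : ℂ) := by norm_num [hψ, hs]
    have h010 : ψ 0 1 0 = (s : ℂ) := by norm_num [hψ, hs]
    have h100 : ψ 1 0 0 = (s : ℂ) := by norm_num [hψ, hs]
    have h000 : ψ 0 0 0 = 0 := by norm_num [hψ]
    have h011 : ψ 0 1 1 = 0 := by norm_num [hψ]
    have h101 : ψ 1 0 1 = 0 := by norm_num [hψ]
    have h110 : ψ 1 1 0 = 0 := by norm_num [hψ]
    have h111 : ψ 1 1 1 = 0 := by norm_num [hψ]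
    have hs0 : 0 ≤ s := by positivity
    simp only [threeQubitInv, Fin.sum_univ_two,
      h000, h001, h010, h011, h100, h101, h110, h111]
    simp only [← Complex.ofReal_mul, hss, mul_zero, zero_mul, mul_one, add_zero,
      zero_add, norm_zero, Complex.norm_real, Real.norm_eq_abs, ne_eq, OfNat.ofNat_ne_zero,
      not_false_eq_true, zero_pow, sub_zero]
    rw [abs_of_nonneg hs0]
    norm_num
    rw [hs, ← Real.sqrt_inv,
      show (Real.sqrt 3⁻¹) ^ 4 = ((Real.sqrt 3⁻¹) ^ 2) ^ 2 by ring, Real.sq_sqrt] <;>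
      norm_num
  · set s : ℝ := (Real.sqrt 2)⁻¹ with hs
    set ψ : Fin 2 → Fin 2 → Fin 2 → ℂ := (fun i j k =>
        if (i = 0 ∧ j = 0 ∧ k = 0) ∨ (i = 0 ∧ j = 1 ∧ k = 1)
          then ((Real.sqrt 2 : ℂ))⁻¹ else 0) with hψ
    have hss : s * s = 2⁻¹ := by
      rw [hs, ← mul_inv, Real.mul_self_sqrt] <;> norm_num
    have h000 : ψ 0 0 0 = (s : ℂ) := by norm_num [hψ, hs]
    have h011 : ψ 0 1 1 = (s : ℂ) := by norm_num [hψ, hs]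
    have h001 : ψ 0 0 1 = 0 := by norm_num [hψ]
    have h010 : ψ 0 1 0 = 0 := by norm_num [hψ]
    have h100 : ψ 1 0 0 = 0 := by norm_num [hψ]
    have h101 : ψ 1 0 1 = 0 := by norm_num [hψ]
    have h110 : ψ 1 1 0 = 0 := by norm_num [hψ]
    have h111 : ψ 1 1 1 = 0 := by norm_num [hψ]
    have hs0 : 0 ≤ s := by positivity
    simp only [threeQubitInv, Fin.sum_univ_two,
      h000, h001, h010, h011, h100, h101, h110, h111]
    simp only [← Complex.ofReal_mul, hss, mul_zero, zero_mul, mul_one, add_zero,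
      zero_add, norm_zero, Complex.norm_real, Real.norm_eq_abs, ne_eq, OfNat.ofNat_ne_zero,
      not_false_eq_true, zero_pow, sub_zero]
    simp only [abs_of_nonneg hs0]
    norm_num [mul_assoc, hss]
    rw [hs, ← Real.sqrt_inv,
      show (Real.sqrt 2⁻¹) ^ 4 = ((Real.sqrt 2⁻¹) ^ 2) ^ 2 by ring, Real.sq_sqrt] <;>
      norm_num
end
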